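/- arXiv:1211.3826 — 5 statements merged into one kernel-verified Lean document; each statement's English description precedes it below -/
import Mathlib

section
/- For every f ∈ L_1[0,1], the integral ∫₀ᵗ (t−s)^{α(t)−1} |f(s)| ds is finite for Lebesgue-almost every t ∈ [0,1]; consequently (R^{α(·)}f)(t) is well-defined for almost all t ∈ [0,1]. -/
open MeasureTheory Real Set Filter
open scoped ENNReal NNReal

/-- The Riemann–Liouville operator of variable order `α(·)`:
`(R^{α(·)}f)(t) = (1/Γ(α(t))) ∫₀ᵗ (t−s)^{α(t)−1} f(s) ds`. -/
noncomputable def RL (α f : ℝ → ℝ) (t : ℝ) : ℝ :=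
  (1 / Real.Gamma (α t)) * ∫ s in Set.Ioc (0 : ℝ) t, (t - s) ^ (α t - 1) * f s

/-- For a fixed exponent `ε > 0`, the convolution of `|f|` with the kernel `u ↦ u^(ε-1)`
(truncated to `(0,1)`) exists almost everywhere. -/
theorem key_conv (f : ℝ → ℝ) (hf : MemLp f 1 (volume.restrict (Set.Icc (0 : ℝ) 1)))
    (ε : ℝ) (hε : 0 < ε) :
    ∀ᵐ t ∂(volume : Measure ℝ),
      Integrable (fun s => ((Set.Icc (0:ℝ) 1).indicator (fun x => |f x|) s) *
        ((Set.Ioo (0:ℝ) 1).indicator (fun u => u ^ (ε - 1)) (t - s))) volume := by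
  set F : ℝ → ℝ := (Set.Icc (0:ℝ) 1).indicator (fun x => |f x|)
  set K : ℝ → ℝ := (Set.Ioo (0:ℝ) 1).indicator (fun u => u ^ (ε - 1))
  have hF : Integrable F volume := by
    rw [integrable_indicator_iff measurableSet_Icc]
    exact (memLp_one_iff_integrable.mp hf).abs
  have hK : Integrable K volume := by
    rw [integrable_indicator_iff measurableSet_Ioo]
    have h1 : IntervalIntegrable (fun u : ℝ => u ^ (ε - 1)) volume 0 1 :=
      intervalIntegral.intervalIntegrable_rpow' (by linarith)
    have h2 : IntegrableOn (fun u : ℝ => u ^ (ε - 1)) (Set.Ioc 0 1) volume := by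
      rwa [intervalIntegrable_iff_integrableOn_Ioc_of_le (by norm_num : (0:ℝ) ≤ 1)] at h1
    exact h2.mono_set Set.Ioo_subset_Ioc_self
  have h := hF.ae_convolution_exists (ContinuousLinearMap.mul ℝ ℝ) hK
  filter_upwards [h] with t ht
  exact ht


theorem key_eps (α : ℝ → ℝ) (hα : Measurable α)
    (f : ℝ → ℝ) (hf : MemLp f 1 (volume.restrict (Set.Icc (0 : ℝ) 1)))
    (ε : ℝ) (hε : 0 < ε) :
    ∀ᵐ t ∂(volume.restrict (Set.Icc (0 : ℝ) 1)),
      ε ≤ α t → IntegrableOn (fun s => (t - s) ^ (α t - 1) * |f s|) (Set.Ioc (0 : ℝ) t) := by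
  have h := key_conv f hf ε hε
  have h' := ae_restrict_of_ae (μ := volume) (s := Set.Icc (0:ℝ) 1) h
  filter_upwards [h', ae_restrict_mem measurableSet_Icc] with t ht htmem hεα
  obtain ⟨ht0, ht1⟩ := htmem
  -- measurability of the target
  have hfm : AEStronglyMeasurable f (volume.restrict (Set.Ioc (0:ℝ) t)) :=
    hf.aestronglyMeasurable.mono_measure
      (Measure.restrict_mono (Set.Ioc_subset_Icc_self.trans (Set.Icc_subset_Icc_right ht1)) le_rfl)
  have hmeas : AEStronglyMeasurable (fun s => (t - s) ^ (α t - 1) * |f s|)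
      (volume.restrict (Set.Ioc (0:ℝ) t)) := by
    refine AEStronglyMeasurable.mul ?_ (by simpa [← Real.norm_eq_abs] using hfm.norm)
    exact (Measurable.aestronglyMeasurable (by fun_prop))
  -- the dominating function
  have hdom : IntegrableOn (fun s => ((Set.Icc (0:ℝ) 1).indicator (fun x => |f x|) s) *
      ((Set.Ioo (0:ℝ) 1).indicator (fun u => u ^ (ε - 1)) (t - s))) (Set.Ioc (0:ℝ) t) :=
    ht.integrableOn
  refine Integrable.mono' hdom hmeas ?_
  have hsingleton : (volume.restrict (Set.Ioc (0:ℝ) t)) {t} = 0 := by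
    simp [Real.volume_singleton, Measure.restrict_apply' measurableSet_Ioc]
    exact measure_mono_null (Set.inter_subset_left) Real.volume_singleton
  filter_upwards [ae_restrict_mem measurableSet_Ioc,
    (ae_iff.mpr (by simpa using hsingleton) : ∀ᵐ s ∂(volume.restrict (Set.Ioc (0:ℝ) t)), s ≠ t)]
    with s hs hst
  have hs0 : 0 < s := hs.1
  have hslt : s < t := lt_of_le_of_ne hs.2 hst
  have hts0 : 0 < t - s := by linarith
  have hts1 : t - s < 1 := by linarith
  have hIcc : s ∈ Set.Icc (0:ℝ) 1 := ⟨le_of_lt hs0, hs.2.trans ht1⟩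
  have hIoo : t - s ∈ Set.Ioo (0:ℝ) 1 := ⟨hts0, hts1⟩
  rw [Set.indicator_of_mem hIcc, Set.indicator_of_mem hIoo]
  rw [Real.norm_eq_abs, abs_mul, abs_of_nonneg (Real.rpow_nonneg (le_of_lt hts0) _),
    abs_abs]
  have hkey : (t - s) ^ (α t - 1) ≤ (t - s) ^ (ε - 1) :=
    Real.rpow_le_rpow_of_exponent_ge hts0 (le_of_lt hts1) (by linarith)
  calc (t - s) ^ (α t - 1) * |f s| ≤ (t - s) ^ (ε - 1) * |f s| :=
        mul_le_mul_of_nonneg_right hkey (abs_nonneg _)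
    _ = |f s| * (t - s) ^ (ε - 1) := mul_comm _ _

/-- **Proposition (existence of the fractional integral).**
If `α : [0,1] → ℝ` is measurable with `α(t) > 0` a.e. and `f ∈ L_1[0,1]`, then for almost
every `t ∈ [0,1]` the function `s ↦ (t−s)^{α(t)−1} |f(s)|` is integrable on `(0,t)`;
hence `(R^{α(·)}f)(t)` is well-defined for almost all `t ∈ [0,1]`. -/
theorem stmt_1 (α : ℝ → ℝ) (hα : Measurable α)
    (hpos : ∀ᵐ t ∂(volume.restrict (Set.Icc (0 : ℝ) 1)), 0 < α t)
    (f : ℝ → ℝ) (hf : MemLp f 1 (volume.restrict (Set.Icc (0 : ℝ) 1))) :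
    ∀ᵐ t ∂(volume.restrict (Set.Icc (0 : ℝ) 1)),
      IntegrableOn (fun s => (t - s) ^ (α t - 1) * |f s|) (Set.Ioc (0 : ℝ) t) := by
  have H : ∀ᵐ t ∂(volume.restrict (Set.Icc (0 : ℝ) 1)), ∀ n : ℕ,
      (1 : ℝ) / (n + 1) ≤ α t →
      IntegrableOn (fun s => (t - s) ^ (α t - 1) * |f s|) (Set.Ioc (0 : ℝ) t) := by
    rw [ae_all_iff]
    intro n
    exact key_eps α hα f hf (1 / (n + 1)) (by positivity)
  filter_upwards [H, hpos] with t hH hαt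
  obtain ⟨n, hn⟩ := exists_nat_one_div_lt hαt
  exact hH n (le_of_lt hn)
end

section
/- There is a universal constant c > 0 such that for every measurable function α : [0,1] → ℝ with α(t) > 0 almost everywhere, every f ∈ L_1[0,1] and every u > 0, the Lebesgue measure of the set {t ∈ [0,1] : |(R^{α(·)}f)(t)| ≥ u} is at most c ‖f‖_1 / u. In other words, R^{α(·)} is a bounded operator from L_1[0,1] into the Lorentz (weak-L_1) space L_{1,∞}[0,1], with a bound independent of α. -/
open MeasureTheory Real Set Filter Metric
open scoped ENNReal NNReal


lemma gamma_lb {x : ℝ} (hx : 1 ≤ x) : Real.exp (-1) ≤ Real.Gamma x := by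
  have hx0 : (0:ℝ) < x := by linarith
  rw [Real.Gamma_eq_integral hx0]
  have hint : IntegrableOn (fun s : ℝ => Real.exp (-s) * s ^ (x - 1)) (Ioi 0) :=
    Real.GammaIntegral_convergent hx0
  have h1 : (∫ s in Ioi (1:ℝ), Real.exp (-s)) ≤ ∫ s in Ioi (1:ℝ), Real.exp (-s) * s ^ (x-1) := by
    apply setIntegral_mono_on
    · simpa using exp_neg_integrableOn_Ioi 1 one_pos
    · exact hint.mono_set (Ioi_subset_Ioi zero_le_one)
    · exact measurableSet_Ioi
    · intro s hs
      have hs1 : (1:ℝ) ≤ s := le_of_lt hs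
      have : (1:ℝ) ≤ s ^ (x-1) := by
        calc (1:ℝ) = 1 ^ (x-1) := (Real.one_rpow _).symm
        _ ≤ s ^ (x-1) := Real.rpow_le_rpow zero_le_one hs1 (by linarith)
      nlinarith [Real.exp_pos (-s)]
  have h2 : (∫ s in Ioi (1:ℝ), Real.exp (-s) * s ^ (x-1)) ≤ ∫ s in Ioi (0:ℝ), Real.exp (-s) * s ^ (x-1) := by
    apply setIntegral_mono_set hint
    · filter_upwards [self_mem_ae_restrict measurableSet_Ioi] with s hs
      have : (0:ℝ) < s := hs
      positivity
    · exact HasSubset.Subset.eventuallyLE (Ioi_subset_Ioi zero_le_one)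
  calc Real.exp (-1) = ∫ s in Ioi (1:ℝ), Real.exp (-s) := (integral_exp_neg_Ioi 1).symm
  _ ≤ _ := h1
  _ ≤ _ := h2


lemma dyadic_bracket {r : ℝ} (h0 : 0 < r) (h1 : r < 1) :
    ∃ k : ℕ, (2⁻¹:ℝ)^(k+1) < r ∧ r ≤ (2⁻¹:ℝ)^k := by
  have hex : ∃ n : ℕ, (2⁻¹:ℝ)^n < r := exists_pow_lt_of_lt_one h0 (by norm_num)
  classical
  have hn : (2⁻¹:ℝ)^(Nat.find hex) < r := Nat.find_spec hex
  have hn0 : Nat.find hex ≠ 0 := by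
    intro h
    rw [h] at hn; simp at hn; linarith
  obtain ⟨k, hk⟩ := Nat.exists_eq_succ_of_ne_zero hn0
  rw [hk] at hn
  refine ⟨k, hn, ?_⟩
  have := Nat.find_min hex (m := k) (by omega)
  linarith [not_lt.mp this]

lemma one_sub_two_rpow {a : ℝ} (h0 : 0 < a) (h1 : a ≤ 1) :
    (2:ℝ)/5 * a ≤ 1 - (2:ℝ)^(-a) := by
  have hL1 : (0.6931471803 : ℝ) < Real.log 2 := Real.log_two_gt_d9
  have hL2 : Real.log 2 < 0.6931471808 := Real.log_two_lt_d9
  have h2 : (2:ℝ)^(-a) = Real.exp (Real.log 2 * (-a)) := by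
    rw [Real.rpow_def_of_pos two_pos]
  rw [h2]
  have hexp : 1 + a * Real.log 2 ≤ Real.exp (a * Real.log 2) :=
    Real.add_one_le_exp _ |>.trans_eq' (by ring_nf)
  have hpos : (0:ℝ) < 1 + a * Real.log 2 := by nlinarith
  have hinv : Real.exp (Real.log 2 * (-a)) ≤ 1 / (1 + a * Real.log 2) := by
    rw [show Real.log 2 * (-a) = -(a * Real.log 2) by ring, Real.exp_neg,
      inv_le_comm₀ (Real.exp_pos _) (by positivity)]
    rw [one_div, inv_inv]
    exact hexp
  have key : 1 / (1 + a * Real.log 2) ≤ 1 - (2:ℝ)/5 * a := by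
    rw [div_le_iff₀ hpos]
    have hL0 : (0:ℝ) ≤ Real.log 2 := by linarith
    have h3 : a * (a * Real.log 2) ≤ a * Real.log 2 := by
      nlinarith [mul_nonneg (sub_nonneg.2 h1) (mul_nonneg h0.le hL0)]
    nlinarith [h3]
  linarith


/-- Weak-type maximal inequality via Vitali covering. -/
lemma maximal_weak (G : ℝ → ℝ≥0∞) (hG : Measurable G) (lam : ℝ≥0∞)
    (hlam0 : lam ≠ 0) (hlamtop : lam ≠ ∞) :
    volume {t : ℝ | ∃ r : ℝ, 0 < r ∧ r ≤ 1 ∧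
        lam * ENNReal.ofReal r ≤ ∫⁻ s in Icc (t - r) t, G s} ≤
      8 * lam⁻¹ * ∫⁻ s, G s := by
  by_cases hfin : (∫⁻ s, G s) = ∞
  · rw [hfin, ENNReal.mul_top]
    · exact le_top
    · simp [hlamtop, ENNReal.inv_ne_zero]
  set E := {t : ℝ | ∃ r : ℝ, 0 < r ∧ r ≤ 1 ∧
      lam * ENNReal.ofReal r ≤ ∫⁻ s in Icc (t - r) t, G s} with hE
  have hrad : ∀ t ∈ E, ∃ r : ℝ, 0 < r ∧ r ≤ 1 ∧
      lam * ENNReal.ofReal r ≤ ∫⁻ s in Icc (t - r) t, G s := fun t ht => ht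
  choose! ρ hρ0 hρ1 hρI using hrad
  obtain ⟨u, huE, hdisj, hcov⟩ :=
    Vitali.exists_disjoint_subfamily_covering_enlargement_closedBall E id ρ 1
      (fun a ha => hρ1 a ha) 4 (by norm_num)
  simp only [id_eq] at hdisj hcov
  set ν := volume.withDensity G with hν
  have hballI : ∀ b ∈ u, lam * ENNReal.ofReal (ρ b) ≤ ν (closedBall b (ρ b)) := by
    intro b hb
    have hbE := huE hb
    calc lam * ENNReal.ofReal (ρ b) ≤ ∫⁻ s in Icc (b - ρ b) b, G s := hρI b hbE
    _ ≤ ∫⁻ s in closedBall b (ρ b), G s := by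
        apply lintegral_mono_set
        rw [Real.closedBall_eq_Icc]
        exact Icc_subset_Icc le_rfl (by linarith [hρ0 b hbE])
    _ = ν (closedBall b (ρ b)) := by
        rw [hν, withDensity_apply _ measurableSet_closedBall]
  have hposball : ∀ b : u, 0 < ν (closedBall (b : ℝ) (ρ b)) := by
    intro b
    refine lt_of_lt_of_le ?_ (hballI b b.2)
    exact ENNReal.mul_pos hlam0 (ENNReal.ofReal_pos.2 (hρ0 b (huE b.2))).ne'
  have hcount : u.Countable := by
    have hc := Measure.countable_meas_pos_of_disjoint_iUnion₀ (μ := ν)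
      (As := fun b : u => closedBall (b : ℝ) (ρ b))
      (fun b => measurableSet_closedBall.nullMeasurableSet)
      (fun i j hij => (hdisj i.2 j.2 (fun h => hij (Subtype.ext h))).aedisjoint)
    have : {b : u | 0 < ν (closedBall (b : ℝ) (ρ b))} = Set.univ := by
      ext b; simp [hposball b]
    rw [this, Set.countable_univ_iff] at hc
    exact Set.countable_coe_iff.mp hc
  -- covering
  have hEsub : E ⊆ ⋃ b ∈ u, closedBall b (4 * ρ b) := by
    intro a ha
    obtain ⟨b, hb, hsub⟩ := hcov a ha
    exact Set.mem_biUnion hb (hsub (mem_closedBall_self (le_of_lt (hρ0 a ha))))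
  calc volume E ≤ volume (⋃ b ∈ u, closedBall b (4 * ρ b)) := measure_mono hEsub
  _ ≤ ∑' b : u, volume (closedBall (b : ℝ) (4 * ρ b)) := measure_biUnion_le _ hcount _
  _ ≤ ∑' b : u, 8 * lam⁻¹ * ν (closedBall (b : ℝ) (ρ b)) := by
      apply ENNReal.tsum_le_tsum
      intro b
      have hbE := huE b.2
      rw [Real.volume_closedBall]
      have h1 : ENNReal.ofReal (2 * (4 * ρ b)) = 8 * ENNReal.ofReal (ρ b) := by
        rw [show (2:ℝ) * (4 * ρ (b:ℝ)) = 8 * ρ (b:ℝ) by ring,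
          ENNReal.ofReal_mul (by norm_num)]
        norm_num
      rw [h1]
      have h2 : ENNReal.ofReal (ρ (b:ℝ)) ≤ lam⁻¹ * ν (closedBall (b : ℝ) (ρ b)) := by
        rw [← ENNReal.div_eq_inv_mul]
        rw [ENNReal.le_div_iff_mul_le (Or.inl hlam0) (Or.inl hlamtop), mul_comm]
        exact hballI b b.2
      calc 8 * ENNReal.ofReal (ρ (b:ℝ)) ≤ 8 * (lam⁻¹ * ν (closedBall (b : ℝ) (ρ b))) := by
            exact mul_le_mul_right h2 8
      _ = 8 * lam⁻¹ * ν (closedBall (b : ℝ) (ρ b)) := by ring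
  _ = 8 * lam⁻¹ * ∑' b : u, ν (closedBall (b : ℝ) (ρ b)) := ENNReal.tsum_mul_left
  _ = 8 * lam⁻¹ * ν (⋃ b ∈ u, closedBall b (ρ b)) := by
      rw [← measure_biUnion hcount hdisj (fun b _ => measurableSet_closedBall)]
  _ ≤ 8 * lam⁻¹ * ν Set.univ := by
      exact mul_le_mul_right (measure_mono (Set.subset_univ _)) _
  _ = 8 * lam⁻¹ * ∫⁻ s, G s := by
      rw [hν, withDensity_apply _ MeasurableSet.univ, Measure.restrict_univ]


noncomputable def Gfun (g : ℝ → ℝ) : ℝ → ℝ≥0∞ :=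
  Set.indicator (Set.Icc 0 1) (fun s => ENNReal.ofReal |g s|)

noncomputable def Amax (g : ℝ → ℝ) (t : ℝ) : ℝ≥0∞ :=
  ⨆ k : ℕ, (2:ℝ≥0∞)^k * ∫⁻ s in Set.Icc (t - (2⁻¹:ℝ)^k) t, Gfun g s



lemma kernel_bound {g : ℝ → ℝ} (hg : Measurable g) {a t : ℝ} (ha : 0 < a)
    (ht : t ∈ Set.Icc (0:ℝ) 1) :
    ENNReal.ofReal (1 / Real.Gamma a) *
        (∫⁻ s in Set.Ioc (0:ℝ) t, ENNReal.ofReal ((t-s)^(a-1) * |g s|)) ≤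
      ENNReal.ofReal 30 * Amax g t := by
  have hGmeas : Measurable (Gfun g) := by
    apply Measurable.indicator _ measurableSet_Icc
    exact ENNReal.measurable_ofReal.comp hg.abs
  have ht0 := ht.1
  have ht1 := ht.2
  have he30 : Real.exp 1 ≤ 30 := by
    nlinarith [Real.exp_one_lt_d9]
  rcases le_or_gt 1 a with h1a | ha1
  · -- case a ≥ 1
    have hb1 : ENNReal.ofReal (1 / Real.Gamma a) ≤ ENNReal.ofReal (Real.exp 1) := by
      apply ENNReal.ofReal_le_ofReal
      rw [div_le_iff₀ (Real.Gamma_pos_of_pos (by linarith))]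
      calc (1:ℝ) = Real.exp 1 * Real.exp (-1) := by
            rw [← Real.exp_add]; norm_num
      _ ≤ Real.exp 1 * Real.Gamma a :=
            mul_le_mul_of_nonneg_left (gamma_lb h1a) (Real.exp_pos 1).le
    have hb2 : (∫⁻ s in Set.Ioc (0:ℝ) t, ENNReal.ofReal ((t-s)^(a-1) * |g s|)) ≤
        ∫⁻ s in Set.Icc (t - (2⁻¹:ℝ)^0) t, Gfun g s := by
      calc (∫⁻ s in Set.Ioc (0:ℝ) t, ENNReal.ofReal ((t-s)^(a-1) * |g s|)) ≤
          ∫⁻ s in Set.Ioc (0:ℝ) t, Gfun g s := by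
            apply setLIntegral_mono hGmeas
            intro s hs
            have hs01 : s ∈ Set.Icc (0:ℝ) 1 := ⟨hs.1.le, hs.2.trans ht1⟩
            rw [Gfun, Set.indicator_of_mem hs01]
            apply ENNReal.ofReal_le_ofReal
            have hts : 0 ≤ t - s := by linarith [hs.2]
            have : (t-s)^(a-1) ≤ 1 :=
              Real.rpow_le_one hts (by linarith [hs.1]) (by linarith)
            nlinarith [abs_nonneg (g s)]
      _ ≤ _ := by
            apply lintegral_mono_set
            intro s hs
            exact ⟨by simp; linarith [hs.1], hs.2⟩
    calc ENNReal.ofReal (1 / Real.Gamma a) * _ ≤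
        ENNReal.ofReal (Real.exp 1) * ∫⁻ s in Set.Icc (t - (2⁻¹:ℝ)^0) t, Gfun g s :=
          mul_le_mul' hb1 hb2
    _ ≤ ENNReal.ofReal 30 * ((2:ℝ≥0∞)^0 * ∫⁻ s in Set.Icc (t - (2⁻¹:ℝ)^0) t, Gfun g s) := by
          rw [pow_zero (2:ℝ≥0∞), one_mul]
          exact mul_le_mul' (ENNReal.ofReal_le_ofReal he30) le_rfl
    _ ≤ ENNReal.ofReal 30 * Amax g t :=
          mul_le_mul' le_rfl (le_iSup (fun k : ℕ => (2:ℝ≥0∞)^k *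
            ∫⁻ s in Set.Icc (t - (2⁻¹:ℝ)^k) t, Gfun g s) 0)
  · -- case a < 1
    set J := ∫⁻ s in Set.Ioc (0:ℝ) t, ENNReal.ofReal ((t-s)^(a-1) * |g s|) with hJ
    set S : ℕ → ℝ≥0∞ := fun k => ∫⁻ s in Set.Icc (t - (2⁻¹:ℝ)^k) t, Gfun g s with hS
    set C : ℕ → Set ℝ := fun k =>
      Set.Ico (t - (2⁻¹:ℝ)^k) (t - (2⁻¹:ℝ)^(k+1)) ∩ Set.Ioc 0 t with hC
    have hgamma : ENNReal.ofReal (1 / Real.Gamma a) ≤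
        ENNReal.ofReal (a * Real.exp 1) := by
      apply ENNReal.ofReal_le_ofReal
      have hGpos : 0 < Real.Gamma a := Real.Gamma_pos_of_pos ha
      have hG1 : Real.exp (-1) ≤ Real.Gamma (a+1) := gamma_lb (by linarith)
      have hrec : Real.Gamma (a+1) = a * Real.Gamma a := Real.Gamma_add_one ha.ne'
      have hee : Real.exp 1 * Real.exp (-1) = 1 := by
        rw [← Real.exp_add]; norm_num
      rw [div_le_iff₀ hGpos]
      nlinarith [mul_le_mul_of_nonneg_left hG1 (Real.exp_pos 1).le, Real.exp_pos 1]
    have hcover : Set.Ioc (0:ℝ) t ⊆ {t} ∪ ⋃ k : ℕ, C k := by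
      intro s hs
      by_cases hst : s = t
      · exact Or.inl (by simp [hst])
      · right
        have hslt : s < t := lt_of_le_of_ne hs.2 hst
        have hr0 : 0 < t - s := by linarith
        have hr1 : t - s < 1 := by linarith [hs.1]
        obtain ⟨k, hk1, hk2⟩ := dyadic_bracket hr0 hr1
        refine Set.mem_iUnion.2 ⟨k, ⟨⟨by linarith, by linarith⟩, hs⟩⟩
    have hsplit : J ≤ ∑' k : ℕ, ∫⁻ s in C k, ENNReal.ofReal ((t-s)^(a-1) * |g s|) := by
      calc J ≤ ∫⁻ s in ({t} ∪ ⋃ k : ℕ, C k),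
            ENNReal.ofReal ((t-s)^(a-1) * |g s|) := lintegral_mono_set hcover
      _ ≤ (∫⁻ s in ({t} : Set ℝ), ENNReal.ofReal ((t-s)^(a-1) * |g s|)) +
            ∫⁻ s in (⋃ k : ℕ, C k), ENNReal.ofReal ((t-s)^(a-1) * |g s|) :=
            lintegral_union_le _ _ _
      _ ≤ 0 + ∑' k : ℕ, ∫⁻ s in C k, ENNReal.ofReal ((t-s)^(a-1) * |g s|) := by
            apply add_le_add
            · rw [setLIntegral_measure_zero _ _ (Real.volume_singleton)]
            · exact lintegral_iUnion_le _ _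
      _ = _ := zero_add _
    have hpiece : ∀ k : ℕ, (∫⁻ s in C k, ENNReal.ofReal ((t-s)^(a-1) * |g s|)) ≤
        ENNReal.ofReal (((2⁻¹:ℝ)^(k+1))^(a-1)) * S k := by
      intro k
      have hwpos : (0:ℝ) < ((2⁻¹:ℝ)^(k+1))^(a-1) := by positivity
      calc (∫⁻ s in C k, ENNReal.ofReal ((t-s)^(a-1) * |g s|)) ≤
          ∫⁻ s in C k, ENNReal.ofReal (((2⁻¹:ℝ)^(k+1))^(a-1)) * Gfun g s := by
            apply setLIntegral_mono (by fun_prop)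
            intro s hs
            obtain ⟨hIco, hIoc⟩ := hs
            have hts : (2⁻¹:ℝ)^(k+1) < t - s := by
              have := hIco.2; linarith
            have hker : (t-s)^(a-1) ≤ ((2⁻¹:ℝ)^(k+1))^(a-1) :=
              Real.rpow_le_rpow_of_nonpos (by positivity) hts.le (by linarith)
            have hs01 : s ∈ Set.Icc (0:ℝ) 1 := ⟨hIoc.1.le, hIoc.2.trans ht1⟩
            rw [Gfun, Set.indicator_of_mem hs01, ← ENNReal.ofReal_mul hwpos.le]
            apply ENNReal.ofReal_le_ofReal
            nlinarith [abs_nonneg (g s)]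
      _ = ENNReal.ofReal (((2⁻¹:ℝ)^(k+1))^(a-1)) * ∫⁻ s in C k, Gfun g s :=
            lintegral_const_mul' _ _ ENNReal.ofReal_ne_top
      _ ≤ _ := by
            apply mul_le_mul' le_rfl
            apply lintegral_mono_set
            intro s hs
            exact ⟨hs.1.1, hs.2.2⟩
    have hSk : ∀ k : ℕ, S k ≤ (2⁻¹:ℝ≥0∞)^k * Amax g t := by
      intro k
      have h1 : (2:ℝ≥0∞)^k * S k ≤ Amax g t := le_iSup (fun k : ℕ => (2:ℝ≥0∞)^k *
        ∫⁻ s in Set.Icc (t - (2⁻¹:ℝ)^k) t, Gfun g s) k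
      calc S k = (2⁻¹:ℝ≥0∞)^k * ((2:ℝ≥0∞)^k * S k) := by
            rw [← mul_assoc, ← mul_pow, ENNReal.inv_mul_cancel two_ne_zero
              ENNReal.ofNat_ne_top, one_pow, one_mul]
      _ ≤ (2⁻¹:ℝ≥0∞)^k * Amax g t := mul_le_mul' le_rfl h1
    -- the geometric series
    have hwq : ∀ k : ℕ, ENNReal.ofReal (((2⁻¹:ℝ)^(k+1))^(a-1)) * (2⁻¹:ℝ≥0∞)^k =
        ENNReal.ofReal ((2:ℝ)^(1-a)) * (ENNReal.ofReal ((2:ℝ)^(-a)))^k := by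
      intro k
      have hbase : ∀ m : ℕ, ((2⁻¹:ℝ))^m = (2:ℝ)^(-(m:ℝ)) := by
        intro m
        rw [← Real.rpow_natCast (2⁻¹:ℝ) m, Real.inv_rpow (by norm_num : (0:ℝ) ≤ 2),
          ← Real.rpow_neg (by norm_num : (0:ℝ) ≤ 2)]
      have hreal : (((2⁻¹:ℝ)^(k+1))^(a-1)) * ((2⁻¹:ℝ)^k) =
          (2:ℝ)^(1-a) * ((2:ℝ)^(-a))^k := by
        rw [hbase (k+1), hbase k, ← Real.rpow_natCast ((2:ℝ)^(-a)) k,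
          ← Real.rpow_mul (by norm_num : (0:ℝ) ≤ 2),
          ← Real.rpow_mul (by norm_num : (0:ℝ) ≤ 2),
          ← Real.rpow_add two_pos, ← Real.rpow_add two_pos]
        congr 1
        push_cast
        ring
      have h2half : (2⁻¹:ℝ≥0∞)^k = ENNReal.ofReal ((2⁻¹:ℝ)^k) := by
        rw [ENNReal.ofReal_pow (by norm_num), ENNReal.ofReal_inv_of_pos two_pos]
        norm_num
      rw [h2half, ← ENNReal.ofReal_mul (by positivity), hreal,
        ENNReal.ofReal_mul (by positivity), ENNReal.ofReal_pow (by positivity)]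
    have hgeom : (∑' k : ℕ, ENNReal.ofReal (((2⁻¹:ℝ)^(k+1))^(a-1)) * (2⁻¹:ℝ≥0∞)^k) ≤
        ENNReal.ofReal 2 * (ENNReal.ofReal (2/5 * a))⁻¹ := by
      have : (∑' k : ℕ, ENNReal.ofReal (((2⁻¹:ℝ)^(k+1))^(a-1)) * (2⁻¹:ℝ≥0∞)^k) =
          ENNReal.ofReal ((2:ℝ)^(1-a)) * (1 - ENNReal.ofReal ((2:ℝ)^(-a)))⁻¹ := by
        simp_rw [hwq]
        rw [ENNReal.tsum_mul_left, ENNReal.tsum_geometric]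
      rw [this]
      apply mul_le_mul'
      · apply ENNReal.ofReal_le_ofReal
        calc (2:ℝ)^(1-a) ≤ (2:ℝ)^(1:ℝ) :=
              Real.rpow_le_rpow_of_exponent_le one_le_two (by linarith)
        _ = 2 := Real.rpow_one 2
      · apply ENNReal.inv_le_inv'
        rw [show (1:ℝ≥0∞) = ENNReal.ofReal 1 by simp,
          ← ENNReal.ofReal_sub 1 (Real.rpow_nonneg (by norm_num) _)]
        exact ENNReal.ofReal_le_ofReal (one_sub_two_rpow ha ha1.le)
    -- assembling
    have hfinalnum : ENNReal.ofReal (a * Real.exp 1) *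
        (ENNReal.ofReal 2 * (ENNReal.ofReal (2/5 * a))⁻¹) ≤ ENNReal.ofReal 30 := by
      rw [← mul_assoc, ← ENNReal.ofReal_mul (by positivity), ← div_eq_mul_inv]
      rw [ENNReal.div_le_iff_le_mul (Or.inl (by
          simp [ENNReal.ofReal_pos]; positivity)) (Or.inl ENNReal.ofReal_ne_top)]
      rw [← ENNReal.ofReal_mul (by norm_num)]
      apply ENNReal.ofReal_le_ofReal
      nlinarith [Real.exp_one_lt_d9, ha.le, Real.exp_pos 1]
    calc ENNReal.ofReal (1 / Real.Gamma a) * J ≤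
        ENNReal.ofReal (a * Real.exp 1) *
          ∑' k : ℕ, ENNReal.ofReal (((2⁻¹:ℝ)^(k+1))^(a-1)) * S k := by
          apply mul_le_mul' hgamma
          exact hsplit.trans (ENNReal.tsum_le_tsum hpiece)
    _ ≤ ENNReal.ofReal (a * Real.exp 1) *
          ∑' k : ℕ, ENNReal.ofReal (((2⁻¹:ℝ)^(k+1))^(a-1)) *
            ((2⁻¹:ℝ≥0∞)^k * Amax g t) := by
          apply mul_le_mul' le_rfl
          exact ENNReal.tsum_le_tsum fun k => mul_le_mul' le_rfl (hSk k)
    _ = ENNReal.ofReal (a * Real.exp 1) *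
          ((∑' k : ℕ, ENNReal.ofReal (((2⁻¹:ℝ)^(k+1))^(a-1)) * (2⁻¹:ℝ≥0∞)^k) *
            Amax g t) := by
          rw [← ENNReal.tsum_mul_right]
          congr 1
          exact tsum_congr fun k => (mul_assoc _ _ _).symm
    _ ≤ ENNReal.ofReal (a * Real.exp 1) *
          ((ENNReal.ofReal 2 * (ENNReal.ofReal (2/5 * a))⁻¹) * Amax g t) :=
          mul_le_mul' le_rfl (mul_le_mul' hgeom le_rfl)
    _ = ENNReal.ofReal (a * Real.exp 1) *
          (ENNReal.ofReal 2 * (ENNReal.ofReal (2/5 * a))⁻¹) * Amax g t := by ring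
    _ ≤ ENNReal.ofReal 30 * Amax g t := mul_le_mul' hfinalnum le_rfl

/-- **Proposition (weak type (1,1) bound, uniform in `α`).**
There is a universal constant `c > 0` such that for every measurable a.e. positive
`α : [0,1] → ℝ`, every `f ∈ L_1[0,1]` and every `u > 0`,
`|{t ∈ [0,1] : |(R^{α(·)}f)(t)| ≥ u}| ≤ c ‖f‖_1 / u`; i.e. `R^{α(·)}` is bounded from
`L_1[0,1]` into the weak space `L_{1,∞}[0,1]` with a bound independent of `α`. -/
theorem stmt_2 :
    ∃ c : ℝ, 0 < c ∧
      ∀ α : ℝ → ℝ, Measurable α →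
        (∀ᵐ t ∂(volume.restrict (Set.Icc (0 : ℝ) 1)), 0 < α t) →
        ∀ f : ℝ → ℝ, MemLp f 1 (volume.restrict (Set.Icc (0 : ℝ) 1)) →
          ∀ u : ℝ, 0 < u →
            volume {t ∈ Set.Icc (0 : ℝ) 1 | u ≤ |RL α f t|} ≤
              ENNReal.ofReal c * eLpNorm f 1 (volume.restrict (Set.Icc (0 : ℝ) 1)) /
                ENNReal.ofReal u := by
  refine ⟨480, by norm_num, ?_⟩
  intro α hα hαpos f hf u hu
  set μI := volume.restrict (Set.Icc (0:ℝ) 1) with hμI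
  have hfm := hf.aestronglyMeasurable
  set g := hfm.mk f with hgdef
  have hgm : Measurable g := hfm.stronglyMeasurable_mk.measurable
  have hfg : f =ᵐ[μI] g := hfm.ae_eq_mk
  -- null sets
  have hN1 : volume ({x | f x ≠ g x} ∩ Set.Icc (0:ℝ) 1) = 0 := by
    have h0 : μI {x | f x ≠ g x} = 0 := hfg
    rwa [hμI, Measure.restrict_apply' measurableSet_Icc] at h0
  have hN0 : volume ({x | ¬ (0 < α x)} ∩ Set.Icc (0:ℝ) 1) = 0 := by
    have h0 : μI {x | ¬ (0 < α x)} = 0 := hαpos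
    rwa [hμI, Measure.restrict_apply' measurableSet_Icc] at h0
  -- the L¹ norm
  have hIeq : (∫⁻ s, Gfun g s) = eLpNorm f 1 μI := by
    rw [eLpNorm_one_eq_lintegral_enorm]
    have h1 : (∫⁻ x, ‖f x‖ₑ ∂μI) = ∫⁻ x, ‖g x‖ₑ ∂μI :=
      lintegral_congr_ae (hfg.mono fun x hx => by dsimp only; rw [hx])
    have h2 : (∫⁻ s, Gfun g s) = ∫⁻ x in Set.Icc (0:ℝ) 1, ENNReal.ofReal |g x| := by
      rw [Gfun]
      exact lintegral_indicator measurableSet_Icc _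
    rw [h1, h2, hμI]
    apply lintegral_congr
    intro x
    rw [Real.enorm_eq_ofReal_abs]
  -- pointwise estimate: the key inclusion
  set lam : ℝ≥0∞ := ENNReal.ofReal (u / 60) with hlam
  have hlam0 : lam ≠ 0 := by
    simp [hlam, ENNReal.ofReal_pos]; positivity
  have hlamtop : lam ≠ ∞ := ENNReal.ofReal_ne_top
  set Emax : Set ℝ := {t : ℝ | ∃ r : ℝ, 0 < r ∧ r ≤ 1 ∧
      lam * ENNReal.ofReal r ≤ ∫⁻ s in Icc (t - r) t, Gfun g s} with hEmax
  have hincl : {t ∈ Set.Icc (0:ℝ) 1 | u ≤ |RL α f t|} ⊆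
      ({x | ¬ (0 < α x)} ∩ Set.Icc (0:ℝ) 1) ∪ Emax := by
    rintro t ⟨ht, hut⟩
    by_cases hat : 0 < α t
    swap
    · exact Or.inl ⟨hat, ht⟩
    right
    -- step 1: |RL| ≤ (1/Γ) * J with J the lintegral over the mk function
    set a := α t with hadef
    set J : ℝ≥0∞ := ∫⁻ s in Set.Ioc (0:ℝ) t, ENNReal.ofReal ((t-s)^(a-1) * |g s|)
      with hJ
    have hstep1 : ENNReal.ofReal |RL α f t| ≤ ENNReal.ofReal (1 / Real.Gamma a) * J := by
      have hΓpos : 0 < Real.Gamma a := Real.Gamma_pos_of_pos hat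
      have habs : |RL α f t| =
          (1 / Real.Gamma a) * |∫ s in Set.Ioc (0:ℝ) t, (t - s) ^ (a - 1) * f s| := by
        rw [RL, abs_mul, abs_of_nonneg (by positivity : (0:ℝ) ≤ 1 / Real.Gamma a)]
      rw [habs, ENNReal.ofReal_mul (by positivity)]
      apply mul_le_mul' le_rfl
      -- |∫ h| ≤ J
      have hnorm : |∫ s in Set.Ioc (0:ℝ) t, (t - s) ^ (a - 1) * f s| ≤
          (∫⁻ s in Set.Ioc (0:ℝ) t,
            ENNReal.ofReal ‖(t - s) ^ (a - 1) * f s‖).toReal := by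
        rw [← Real.norm_eq_abs]
        exact norm_integral_le_lintegral_norm _
      have hcongr : (∫⁻ s in Set.Ioc (0:ℝ) t,
          ENNReal.ofReal ‖(t - s) ^ (a - 1) * f s‖) = J := by
        apply lintegral_congr_ae
        rw [Filter.EventuallyEq, ae_iff, Measure.restrict_apply' measurableSet_Ioc]
        refine measure_mono_null ?_ hN1
        rintro x ⟨hxne, hxIoc⟩
        exact ⟨fun hfx => hxne (by

          rw [Real.norm_eq_abs, abs_mul,
            abs_of_nonneg (Real.rpow_nonneg (by linarith [hxIoc.2] : (0:ℝ) ≤ t - x) _),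
            hfx]), ⟨hxIoc.1.le, hxIoc.2.trans ht.2⟩⟩
      calc ENNReal.ofReal |∫ s in Set.Ioc (0:ℝ) t, (t - s) ^ (a - 1) * f s| ≤
          ENNReal.ofReal ((∫⁻ s in Set.Ioc (0:ℝ) t,
            ENNReal.ofReal ‖(t - s) ^ (a - 1) * f s‖).toReal) :=
            ENNReal.ofReal_le_ofReal hnorm
      _ ≤ ∫⁻ s in Set.Ioc (0:ℝ) t, ENNReal.ofReal ‖(t - s) ^ (a - 1) * f s‖ :=
            ENNReal.ofReal_toReal_le
      _ = J := hcongr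
    -- step 2: kernel bound
    have hstep2 : ENNReal.ofReal u ≤ ENNReal.ofReal 30 * Amax g t := by
      calc ENNReal.ofReal u ≤ ENNReal.ofReal |RL α f t| := ENNReal.ofReal_le_ofReal hut
      _ ≤ _ := hstep1.trans (kernel_bound hgm hat ht)
    -- step 3: extract a scale
    have hA : lam < Amax g t := by
      have h30 : ENNReal.ofReal (u/30) ≤ Amax g t := by
        rw [ENNReal.ofReal_div_of_pos (by norm_num), ENNReal.div_le_iff_le_mul
          (Or.inl (by simp)) (Or.inl ENNReal.ofReal_ne_top), mul_comm]
        exact hstep2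
      refine lt_of_lt_of_le ?_ h30
      rw [hlam]
      exact ENNReal.ofReal_lt_ofReal_iff_of_nonneg (by positivity) |>.2 (by linarith)
    rw [Amax, lt_iSup_iff] at hA
    obtain ⟨k, hk⟩ := hA
    refine ⟨(2⁻¹:ℝ)^k, by positivity, pow_le_one₀ (by norm_num) (by norm_num), ?_⟩
    have h2half : ENNReal.ofReal ((2⁻¹:ℝ)^k) = (2⁻¹:ℝ≥0∞)^k := by
      rw [ENNReal.ofReal_pow (by norm_num), ENNReal.ofReal_inv_of_pos two_pos]
      norm_num
    rw [h2half]
    calc lam * (2⁻¹:ℝ≥0∞)^k ≤ ((2:ℝ≥0∞)^k *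
        ∫⁻ s in Set.Icc (t - (2⁻¹:ℝ)^k) t, Gfun g s) * (2⁻¹:ℝ≥0∞)^k :=
          mul_le_mul' hk.le le_rfl
    _ = ((2:ℝ≥0∞)^k * (2⁻¹:ℝ≥0∞)^k) * ∫⁻ s in Set.Icc (t - (2⁻¹:ℝ)^k) t, Gfun g s := by
          ring
    _ = ∫⁻ s in Set.Icc (t - (2⁻¹:ℝ)^k) t, Gfun g s := by
          rw [← mul_pow, ENNReal.mul_inv_cancel two_ne_zero ENNReal.ofNat_ne_top,
            one_pow, one_mul]
  -- conclude
  calc volume {t ∈ Set.Icc (0:ℝ) 1 | u ≤ |RL α f t|} ≤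
      volume (({x | ¬ (0 < α x)} ∩ Set.Icc (0:ℝ) 1) ∪ Emax) := measure_mono hincl
  _ ≤ volume ({x | ¬ (0 < α x)} ∩ Set.Icc (0:ℝ) 1) + volume Emax := measure_union_le _ _
  _ = volume Emax := by rw [hN0, zero_add]
  _ ≤ 8 * lam⁻¹ * ∫⁻ s, Gfun g s := maximal_weak (Gfun g)
        ((ENNReal.measurable_ofReal.comp hgm.abs).indicator measurableSet_Icc) lam hlam0 hlamtop
  _ ≤ ENNReal.ofReal 480 * eLpNorm f 1 μI / ENNReal.ofReal u := by
      rw [hIeq, hlam, ENNReal.ofReal_div_of_pos (by norm_num),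
        ENNReal.inv_div (Or.inr (ENNReal.ofReal_ne_top))
          (Or.inr (ENNReal.ofReal_pos.2 hu).ne')]
      rw [ENNReal.div_eq_inv_mul, ENNReal.div_eq_inv_mul]
      have h8 : (8:ℝ≥0∞) * ENNReal.ofReal 60 = ENNReal.ofReal 480 := by
        rw [show (8:ℝ≥0∞) = ENNReal.ofReal 8 by simp,
          ← ENNReal.ofReal_mul (by norm_num)]
        norm_num
      apply le_of_eq
      calc 8 * ((ENNReal.ofReal u)⁻¹ * ENNReal.ofReal 60) * eLpNorm f 1 μI
          = (ENNReal.ofReal u)⁻¹ * ((8 * ENNReal.ofReal 60) * eLpNorm f 1 μI) := by ring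
      _ = (ENNReal.ofReal u)⁻¹ * (ENNReal.ofReal 480 * eLpNorm f 1 μI) := by rw [h8]
end

section
/- The operator R^{α(·)} is bounded from L_1[0,1] to L_1[0,1] if and only if M := sup_{0≤s≤1} ∫_s^1 (1/Γ(α(t))) (t−s)^{α(t)−1} dt < ∞. Moreover, in this case the operator norm ‖R^{α(·)} : L_1[0,1] → L_1[0,1]‖ equals M. -/
open MeasureTheory Real Set Filter
open scoped ENNReal NNReal
open scoped Topology

/-- `M = sup_{0≤s≤1} ∫_s^1 (1/Γ(α(t))) (t−s)^{α(t)−1} dt` (valued in `ℝ≥0∞`). -/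
noncomputable def Msup (α : ℝ → ℝ) : ℝ≥0∞ :=
  ⨆ s ∈ Set.Icc (0 : ℝ) 1,
    ∫⁻ t in Set.Ioc s 1, ENNReal.ofReal ((1 / Real.Gamma (α t)) * (t - s) ^ (α t - 1))

/- ### Auxiliary definitions and lemmas -/

lemma gammaMeasurable : Measurable Real.Gamma := by
  classical
  set N : Set ℝ := {x : ℝ | ∃ m : ℕ, x = -(m : ℝ)} with hNdef
  have hN : N.Countable := by
    have : N = Set.range (fun m : ℕ => -(m : ℝ)) := by
      ext x; simp [hNdef, eq_comm]
    rw [this]; exact Set.countable_range _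
  have hmeasN : MeasurableSet N := hN.measurableSet
  have h1 : ContinuousOn Real.Gamma Nᶜ := by
    intro x hx
    have hx' : ∀ m : ℕ, x ≠ -(m : ℝ) := by
      intro m hm; exact hx ⟨m, hm⟩
    exact (Real.differentiableAt_Gamma hx').continuousAt.continuousWithinAt
  have h2 : ContinuousOn Real.Gamma N := by
    intro x hx
    obtain ⟨m, rfl⟩ := hx
    have hx1 : {(-(m : ℝ))} ∈ 𝓝[N] (-(m : ℝ)) := by
      rw [mem_nhdsWithin]
      refine ⟨Metric.ball (-(m : ℝ)) 1, Metric.isOpen_ball, Metric.mem_ball_self one_pos, ?_⟩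
      rintro y ⟨hy1, m', rfl⟩
      have hdist : |((m' : ℝ)) - ((m : ℝ))| < 1 := by
        simpa [Real.dist_eq, abs_sub_comm] using hy1
      have h : |((m' : ℤ) : ℝ) - ((m : ℤ) : ℝ)| < 1 := by push_cast; exact hdist
      have h2 : |(m' : ℤ) - (m : ℤ)| < 1 := by exact_mod_cast h
      have h2b := abs_lt.mp h2
      have h3 : (m' : ℤ) = (m : ℤ) := by omega
      have : (m' : ℝ) = (m : ℝ) := by exact_mod_cast h3
      simp [this]
    have hev : Real.Gamma =ᶠ[𝓝[N] (-(m : ℝ))] fun _ => Real.Gamma (-(m : ℝ)) := by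
      filter_upwards [hx1] with y hy
      rw [Set.mem_singleton_iff.mp hy]
    exact Filter.Tendsto.congr' hev.symm tendsto_const_nhds
  have := ContinuousOn.measurable_piecewise h2 h1 hmeasN
  simpa [Set.piecewise_same] using this

noncomputable def Kk (α : ℝ → ℝ) (t s : ℝ) : ℝ≥0∞ :=
  ENNReal.ofReal ((1 / Real.Gamma (α t)) * (t - s) ^ (α t - 1))

/-- measurable surrogate of `Kk`, agreeing with it when `s < t`. -/
noncomputable def Kk' (α : ℝ → ℝ) (t s : ℝ) : ℝ≥0∞ :=
  ENNReal.ofReal ((1 / Real.Gamma (α t)) * Real.exp (Real.log (t - s) * (α t - 1)))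

lemma Kk'_eq {α : ℝ → ℝ} {t s : ℝ} (h : s < t) : Kk' α t s = Kk α t s := by
  rw [Kk, Kk', Real.rpow_def_of_pos (sub_pos.2 h)]

noncomputable def gg (α : ℝ → ℝ) (s : ℝ) : ℝ≥0∞ := ∫⁻ t in Set.Ioc s 1, Kk α t s

lemma Msup_eq (α : ℝ → ℝ) : Msup α = ⨆ s ∈ Set.Icc (0 : ℝ) 1, gg α s := rfl

lemma measKk' {α : ℝ → ℝ} (hα : Measurable α) :
    Measurable (fun p : ℝ × ℝ => Kk' α p.1 p.2) := by
  apply ENNReal.measurable_ofReal.comp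
  exact (measurable_const.div (gammaMeasurable.comp (hα.comp measurable_fst))).mul
    (Real.measurable_exp.comp
      ((Real.measurable_log.comp (measurable_fst.sub measurable_snd)).mul
        ((hα.comp measurable_fst).sub measurable_const)))

lemma measKk'1 {α : ℝ → ℝ} (hα : Measurable α) (s : ℝ) :
    Measurable (fun t : ℝ => Kk' α t s) :=
  (measKk' hα).comp (measurable_id.prodMk measurable_const)

lemma rpow_const_measurable (c : ℝ) : Measurable (fun x : ℝ => x ^ c) := by
  apply measurable_of_continuousOn_compl_singleton (0 : ℝ)
  intro x hx
  exact (Real.continuousAt_rpow_const x c (Or.inl hx)).continuousWithinAt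

lemma measgg {α : ℝ → ℝ} (hα : Measurable α) : Measurable (gg α) := by
  have heq : gg α = fun s => ∫⁻ t, ({p : ℝ × ℝ | p.2 ∈ Set.Ioc p.1 1}.indicator
      (fun p : ℝ × ℝ => Kk' α p.2 p.1)) (s, t) := by
    funext s
    rw [gg, ← lintegral_indicator measurableSet_Ioc]
    refine lintegral_congr fun t => ?_
    by_cases h : t ∈ Set.Ioc s 1
    · simp only [Set.indicator, Set.mem_setOf_eq, if_pos h]
      rw [Kk'_eq h.1]
    · simp only [Set.indicator, Set.mem_setOf_eq]
      rw [if_neg h, if_neg h]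
  rw [heq]
  apply Measurable.lintegral_prod_right'
  apply Measurable.indicator
  · exact (measKk' hα).comp (measurable_snd.prodMk measurable_fst)
  · exact (measurableSet_lt measurable_fst measurable_snd).inter
      (measurableSet_le measurable_snd measurable_const)

lemma tonelli {α : ℝ → ℝ} (hα : Measurable α) {F : ℝ → ℝ≥0∞} (hF : Measurable F) :
    ∫⁻ t in Set.Icc (0:ℝ) 1, ∫⁻ s in Set.Ioc (0:ℝ) t, Kk α t s * F s
      = ∫⁻ s in Set.Ioc (0:ℝ) 1, F s * gg α s := by
  classical
  set S : Set (ℝ × ℝ) := {p | (p.1 ∈ Set.Icc (0:ℝ) 1) ∧ 0 < p.2 ∧ p.2 < p.1} with hS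
  have hSmeas : MeasurableSet S := by
    have : S = ((fun p : ℝ × ℝ => p.1) ⁻¹' Set.Icc 0 1) ∩
        ({p : ℝ × ℝ | 0 < p.2} ∩ {p | p.2 < p.1}) := by
      ext p; simp [hS, and_assoc]
    rw [this]
    exact (measurable_fst measurableSet_Icc).inter
      ((measurableSet_lt measurable_const measurable_snd).inter
       (measurableSet_lt measurable_snd measurable_fst))
  set H : ℝ × ℝ → ℝ≥0∞ := S.indicator (fun p => Kk' α p.1 p.2 * F p.2) with hH
  have hHmeas : Measurable H :=
    ((measKk' hα).mul (hF.comp measurable_snd)).indicator hSmeas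
  have lhs_eq : ∫⁻ t in Set.Icc (0:ℝ) 1, ∫⁻ s in Set.Ioc (0:ℝ) t, Kk α t s * F s
      = ∫⁻ t, ∫⁻ s, H (t, s) := by
    rw [← lintegral_indicator measurableSet_Icc]
    refine lintegral_congr fun t => ?_
    by_cases ht : t ∈ Set.Icc (0:ℝ) 1
    · rw [Set.indicator_of_mem ht]
      have h1 : ∫⁻ s in Set.Ioc (0:ℝ) t, Kk α t s * F s
          = ∫⁻ s in Set.Ioo (0:ℝ) t, Kk α t s * F s :=
        (setLIntegral_congr MeasureTheory.Ioo_ae_eq_Ioc).symm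
      rw [h1, ← lintegral_indicator measurableSet_Ioo]
      refine lintegral_congr fun s => ?_
      by_cases hs : s ∈ Set.Ioo (0:ℝ) t
      · rw [Set.indicator_of_mem hs, hH,
          Set.indicator_of_mem (show (t,s) ∈ S from ⟨ht, hs.1, hs.2⟩), Kk'_eq hs.2]
      · rw [Set.indicator_of_notMem hs, hH, Set.indicator_of_notMem]
        rintro ⟨-, h1', h2'⟩; exact hs ⟨h1', h2'⟩
    · rw [Set.indicator_of_notMem ht]
      have hzero : ∀ s, H (t, s) = 0 := fun s =>
        Set.indicator_of_notMem (fun hmem => ht hmem.1) _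
      simp [hzero]
  have swap : ∫⁻ t, ∫⁻ s, H (t, s) = ∫⁻ s, ∫⁻ t, H (t, s) :=
    lintegral_lintegral_swap hHmeas.aemeasurable
  have rhs_eq : ∫⁻ s, ∫⁻ t, H (t, s) = ∫⁻ s in Set.Ioc (0:ℝ) 1, F s * gg α s := by
    rw [← lintegral_indicator measurableSet_Ioc]
    refine lintegral_congr fun s => ?_
    by_cases hs : s ∈ Set.Ioc (0:ℝ) 1
    · rw [Set.indicator_of_mem hs]
      have h1 : ∀ t, H (t, s) = (Set.Ioc s 1).indicator (fun t => Kk' α t s * F s) t := by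
        intro t
        by_cases ht : t ∈ Set.Ioc s 1
        · rw [Set.indicator_of_mem ht, hH, Set.indicator_of_mem]
          exact ⟨⟨(hs.1.trans ht.1).le, ht.2⟩, hs.1, ht.1⟩
        · rw [Set.indicator_of_notMem ht, hH, Set.indicator_of_notMem]
          rintro ⟨hta, -, hst⟩; exact ht ⟨hst, hta.2⟩
      simp_rw [h1]
      rw [lintegral_indicator measurableSet_Ioc]
      have h2 : ∫⁻ t in Set.Ioc s 1, Kk' α t s * F s
          = ∫⁻ t in Set.Ioc s 1, F s * Kk' α t s := by
        refine setLIntegral_congr_fun_ae measurableSet_Ioc (ae_of_all _ fun t ht => ?_)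
        rw [mul_comm]
      rw [h2, lintegral_const_mul _ (measKk'1 hα s)]
      congr 1
      refine setLIntegral_congr_fun_ae measurableSet_Ioc (ae_of_all _ fun t ht => ?_)
      exact Kk'_eq ht.1
    · have hzero : ∀ t, H (t, s) = 0 := by
        intro t
        refine Set.indicator_of_notMem ?_ _
        rintro ⟨hta, hs1, hst⟩
        exact hs ⟨hs1, hst.le.trans hta.2⟩
      rw [Set.indicator_of_notMem hs]
      simp [hzero]
  rw [lhs_eq, swap, rhs_eq]

lemma pointwise_upper {α : ℝ → ℝ} (f : ℝ → ℝ) {t : ℝ} (ht : 0 < α t) :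
    (‖RL α f t‖₊ : ℝ≥0∞) ≤ ∫⁻ s in Set.Ioc (0:ℝ) t, Kk α t s * ‖f s‖₊ := by
  have hc : 0 < 1 / Real.Gamma (α t) := by
    have := Real.Gamma_pos_of_pos ht; positivity
  calc (‖RL α f t‖₊ : ℝ≥0∞)
      = (‖1 / Real.Gamma (α t)‖₊ : ℝ≥0∞) *
        ‖∫ s in Set.Ioc (0:ℝ) t, (t - s) ^ (α t - 1) * f s‖₊ := by
        rw [RL, nnnorm_mul, ENNReal.coe_mul]
    _ ≤ (‖1 / Real.Gamma (α t)‖₊ : ℝ≥0∞) *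
        ∫⁻ s in Set.Ioc (0:ℝ) t, ‖(t - s) ^ (α t - 1) * f s‖₊ :=
        mul_le_mul_right (enorm_integral_le_lintegral_enorm _) _
    _ = ∫⁻ s in Set.Ioc (0:ℝ) t,
          (‖1 / Real.Gamma (α t)‖₊ : ℝ≥0∞) * ‖(t - s) ^ (α t - 1) * f s‖₊ :=
        (lintegral_const_mul' _ _ ENNReal.coe_ne_top).symm
    _ ≤ ∫⁻ s in Set.Ioc (0:ℝ) t, Kk α t s * ‖f s‖₊ := by
        refine setLIntegral_mono' measurableSet_Ioc fun s hs => ?_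
        have hrp : (0:ℝ) ≤ (t - s) ^ (α t - 1) := Real.rpow_nonneg (sub_nonneg.2 hs.2) _
        rw [nnnorm_mul, ENNReal.coe_mul, ← mul_assoc,
          (enorm_eq_nnnorm _).symm.trans (Real.enorm_eq_ofReal hc.le),
          (enorm_eq_nnnorm _).symm.trans (Real.enorm_eq_ofReal hrp),
          ← ENNReal.ofReal_mul hc.le]
        exact le_rfl

lemma pointwise_eq {α : ℝ → ℝ} {A : Set ℝ} (hA : MeasurableSet A) {t : ℝ}
    (ht : 0 < α t) (ht0 : 0 ≤ t) :
    (‖RL α (A.indicator fun _ => (1:ℝ)) t‖₊ : ℝ≥0∞)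
      = ∫⁻ s in Set.Ioc (0:ℝ) t, Kk α t s * ‖A.indicator (fun _ => (1:ℝ)) s‖₊ := by
  classical
  set c := 1 / Real.Gamma (α t) with hcdef
  have hc : 0 < c := by
    have := Real.Gamma_pos_of_pos ht; positivity
  set β := α t - 1 with hβdef
  have hβ : (-1:ℝ) < β := by simp only [hβdef]; linarith
  set ind := A.indicator fun _ => (1:ℝ) with hinddef
  have hind_nonneg : ∀ s, 0 ≤ ind s := fun s =>
    Set.indicator_nonneg (fun _ _ => zero_le_one) s
  have hind_le : ∀ s, ind s ≤ 1 := fun s => by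
    by_cases h : s ∈ A <;> simp [hinddef, Set.indicator, h]
  have hker_int : IntegrableOn (fun s => (t - s) ^ β) (Set.Ioc 0 t) := by
    have h1 : IntervalIntegrable (fun x : ℝ => x ^ β) volume 0 t :=
      intervalIntegral.intervalIntegrable_rpow' hβ
    have h2 := h1.comp_sub_left t
    rw [sub_zero, sub_self] at h2
    have h3 := h2.symm
    rwa [intervalIntegrable_iff_integrableOn_Ioc_of_le ht0] at h3
  have hf_int : IntegrableOn (fun s => (t - s) ^ β * ind s) (Set.Ioc 0 t) := by
    refine Integrable.mono' hker_int ?_ ?_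
    · exact (((rpow_const_measurable β).comp (measurable_const.sub measurable_id)).mul
        (measurable_const.indicator hA)).aestronglyMeasurable
    · filter_upwards [ae_restrict_mem measurableSet_Ioc] with s hs
      have hrp : (0:ℝ) ≤ (t - s) ^ β := Real.rpow_nonneg (sub_nonneg.2 hs.2) _
      rw [Real.norm_eq_abs, abs_of_nonneg (mul_nonneg hrp (hind_nonneg s))]
      calc (t - s)^β * ind s ≤ (t - s)^β * 1 :=
            mul_le_mul_of_nonneg_left (hind_le s) hrp
        _ = (t - s)^β := mul_one _
  have h0 : 0 ≤ᵐ[volume.restrict (Set.Ioc (0:ℝ) t)] fun s => (t - s) ^ β * ind s := by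
    filter_upwards [ae_restrict_mem measurableSet_Ioc] with s hs
    exact mul_nonneg (Real.rpow_nonneg (sub_nonneg.2 hs.2) _) (hind_nonneg s)
  have hI : 0 ≤ ∫ s in Set.Ioc (0:ℝ) t, (t - s) ^ β * ind s := integral_nonneg_of_ae h0
  have hRL : RL α ind t = c * ∫ s in Set.Ioc (0:ℝ) t, (t - s) ^ β * ind s := rfl
  rw [hRL, (enorm_eq_nnnorm _).symm.trans (Real.enorm_eq_ofReal (mul_nonneg hc.le hI)), ENNReal.ofReal_mul hc.le,
    MeasureTheory.ofReal_integral_eq_lintegral_ofReal hf_int h0,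
    ← lintegral_const_mul' _ _ ENNReal.ofReal_ne_top]
  refine setLIntegral_congr_fun_ae measurableSet_Ioc (ae_of_all _ fun s hs => ?_)
  have hrp : (0:ℝ) ≤ (t - s) ^ β := Real.rpow_nonneg (sub_nonneg.2 hs.2) _
  rw [ENNReal.ofReal_mul hrp, ← mul_assoc, ← ENNReal.ofReal_mul hc.le,
    (enorm_eq_nnnorm _).symm.trans (Real.enorm_eq_ofReal (hind_nonneg s))]
  rfl

lemma upper_meas {α : ℝ → ℝ} (hα : Measurable α)
    (hpos : ∀ᵐ t ∂(volume.restrict (Set.Icc (0 : ℝ) 1)), 0 < α t)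
    {f : ℝ → ℝ} (hf : Measurable f) :
    eLpNorm (RL α f) 1 (volume.restrict (Set.Icc (0 : ℝ) 1)) ≤
      Msup α * eLpNorm f 1 (volume.restrict (Set.Icc (0 : ℝ) 1)) := by
  rw [eLpNorm_one_eq_lintegral_enorm, eLpNorm_one_eq_lintegral_enorm]
  simp only [enorm_eq_nnnorm]
  have hFmeas : Measurable (fun s => (‖f s‖₊ : ℝ≥0∞)) :=
    hf.nnnorm.coe_nnreal_ennreal
  calc ∫⁻ t in Set.Icc (0:ℝ) 1, (‖RL α f t‖₊ : ℝ≥0∞)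
      ≤ ∫⁻ t in Set.Icc (0:ℝ) 1, ∫⁻ s in Set.Ioc (0:ℝ) t, Kk α t s * ‖f s‖₊ :=
        lintegral_mono_ae (hpos.mono fun t ht => pointwise_upper f ht)
    _ = ∫⁻ s in Set.Ioc (0:ℝ) 1, (‖f s‖₊ : ℝ≥0∞) * gg α s := tonelli hα hFmeas
    _ ≤ ∫⁻ s in Set.Ioc (0:ℝ) 1, (‖f s‖₊ : ℝ≥0∞) * Msup α := by
        refine lintegral_mono_ae ?_
        filter_upwards [ae_restrict_mem measurableSet_Ioc] with s hs
        refine mul_le_mul_right ?_ _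
        rw [Msup_eq]
        exact le_biSup _ (Set.Ioc_subset_Icc_self hs)
    _ = Msup α * ∫⁻ s in Set.Ioc (0:ℝ) 1, (‖f s‖₊ : ℝ≥0∞) := by
        simp_rw [mul_comm]
        exact lintegral_const_mul _ hFmeas
    _ = Msup α * ∫⁻ s in Set.Icc (0:ℝ) 1, (‖f s‖₊ : ℝ≥0∞) := by
        rw [setLIntegral_congr MeasureTheory.Ioc_ae_eq_Icc]

lemma upper_bound {α : ℝ → ℝ} (hα : Measurable α)
    (hpos : ∀ᵐ t ∂(volume.restrict (Set.Icc (0 : ℝ) 1)), 0 < α t)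
    (f : ℝ → ℝ) (hf : MemLp f 1 (volume.restrict (Set.Icc (0 : ℝ) 1))) :
    eLpNorm (RL α f) 1 (volume.restrict (Set.Icc (0 : ℝ) 1)) ≤
      Msup α * eLpNorm f 1 (volume.restrict (Set.Icc (0 : ℝ) 1)) := by
  have hsm := hf.1
  set f' := hsm.mk f with hf'def
  have hmeas : Measurable f' := hsm.stronglyMeasurable_mk.measurable
  have hae : f =ᵐ[volume.restrict (Set.Icc (0 : ℝ) 1)] f' := hsm.ae_eq_mk
  have h0 : volume ({x | f x ≠ f' x} ∩ Set.Icc (0:ℝ) 1) = 0 := by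
    have := ae_iff.mp hae
    rwa [Measure.restrict_apply' measurableSet_Icc] at this
  have hRL : RL α f =ᵐ[volume.restrict (Set.Icc (0 : ℝ) 1)] RL α f' := by
    filter_upwards [ae_restrict_mem measurableSet_Icc] with t ht
    rw [RL, RL]
    congr 1
    refine integral_congr_ae ?_
    have hnull : volume ({x | f x ≠ f' x} ∩ Set.Ioc (0:ℝ) t) = 0 := by
      refine measure_mono_null ?_ h0
      refine Set.inter_subset_inter_right _ fun x hx => ?_
      exact ⟨hx.1.le, hx.2.trans ht.2⟩
    have : f =ᵐ[volume.restrict (Set.Ioc (0:ℝ) t)] f' := by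
      rw [Filter.EventuallyEq, ae_iff, Measure.restrict_apply' measurableSet_Ioc]
      exact hnull
    filter_upwards [this] with s hs
    rw [hs]
  rw [eLpNorm_congr_ae hRL, eLpNorm_congr_ae hae]
  exact upper_meas hα hpos hmeas

lemma memLp_ind {A : Set ℝ} (hA : MeasurableSet A) :
    MemLp (A.indicator fun _ => (1:ℝ)) 1 (volume.restrict (Set.Icc (0 : ℝ) 1)) := by
  constructor
  · exact (measurable_const.indicator hA).aestronglyMeasurable
  · rw [eLpNorm_one_eq_lintegral_enorm]
    calc ∫⁻ t in Set.Icc (0:ℝ) 1, (‖A.indicator (fun _ => (1:ℝ)) t‖₊ : ℝ≥0∞)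
        ≤ ∫⁻ _ in Set.Icc (0:ℝ) 1, 1 := by
          refine lintegral_mono fun t => ?_
          by_cases h : t ∈ A <;> simp [Set.indicator, h]
      _ < ⊤ := by
          rw [lintegral_one, Measure.restrict_apply_univ, Real.volume_Icc]
          norm_num

lemma eLp_ind {A : Set ℝ} (hA : MeasurableSet A) (hA1 : A ⊆ Set.Ioc (0:ℝ) 1) :
    eLpNorm (A.indicator fun _ => (1:ℝ)) 1 (volume.restrict (Set.Icc (0 : ℝ) 1))
      = volume A := by
  rw [eLpNorm_one_eq_lintegral_enorm]
  simp only [enorm_eq_nnnorm]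
  have h1 : ∀ t, (‖A.indicator (fun _ => (1:ℝ)) t‖₊ : ℝ≥0∞) = A.indicator 1 t := by
    intro t
    by_cases h : t ∈ A <;> simp [Set.indicator, h]
  rw [lintegral_congr h1, lintegral_indicator hA, Measure.restrict_restrict hA,
    Set.inter_eq_self_of_subset_left (hA1.trans Set.Ioc_subset_Icc_self)]
  simp

lemma identity_ind {α : ℝ → ℝ} (hα : Measurable α)
    (hpos : ∀ᵐ t ∂(volume.restrict (Set.Icc (0 : ℝ) 1)), 0 < α t)
    {A : Set ℝ} (hA : MeasurableSet A) (hA1 : A ⊆ Set.Ioc (0:ℝ) 1) :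
    eLpNorm (RL α (A.indicator fun _ => (1:ℝ))) 1 (volume.restrict (Set.Icc (0 : ℝ) 1))
      = ∫⁻ s in A, gg α s := by
  rw [eLpNorm_one_eq_lintegral_enorm]
  simp only [enorm_eq_nnnorm]
  have hFmeas : Measurable (fun s => (‖A.indicator (fun _ => (1:ℝ)) s‖₊ : ℝ≥0∞)) :=
    (measurable_const.indicator hA).nnnorm.coe_nnreal_ennreal
  have step1 : ∫⁻ t in Set.Icc (0:ℝ) 1, (‖RL α (A.indicator fun _ => (1:ℝ)) t‖₊ : ℝ≥0∞)
      = ∫⁻ t in Set.Icc (0:ℝ) 1, ∫⁻ s in Set.Ioc (0:ℝ) t,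
          Kk α t s * ‖A.indicator (fun _ => (1:ℝ)) s‖₊ := by
    refine lintegral_congr_ae ?_
    filter_upwards [hpos, ae_restrict_mem measurableSet_Icc] with t h1 h2
    exact pointwise_eq hA h1 h2.1
  rw [step1, tonelli hα hFmeas]
  have h2 : ∀ s, (‖A.indicator (fun _ => (1:ℝ)) s‖₊ : ℝ≥0∞) * gg α s
      = A.indicator (fun s => gg α s) s := by
    intro s
    by_cases h : s ∈ A <;> simp [Set.indicator, h]
  rw [lintegral_congr h2, lintegral_indicator hA, Measure.restrict_restrict hA,
    Set.inter_eq_self_of_subset_left hA1]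

lemma ae_le_of_bound {α : ℝ → ℝ} (hα : Measurable α)
    (hpos : ∀ᵐ t ∂(volume.restrict (Set.Icc (0 : ℝ) 1)), 0 < α t)
    {C : ℝ≥0∞} (hC : C ≠ ⊤)
    (hb : ∀ f : ℝ → ℝ, MemLp f 1 (volume.restrict (Set.Icc (0 : ℝ) 1)) →
      eLpNorm (RL α f) 1 (volume.restrict (Set.Icc (0 : ℝ) 1)) ≤
        C * eLpNorm f 1 (volume.restrict (Set.Icc (0 : ℝ) 1))) :
    ∀ᵐ u ∂(volume.restrict (Set.Ioc (0:ℝ) 1)), gg α u ≤ C := by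
  by_contra h
  rw [ae_iff] at h
  have hsub : {u | ¬ gg α u ≤ C} ⊆
      ⋃ q : ℚ, {u | C < ENNReal.ofReal q ∧ ENNReal.ofReal q ≤ gg α u} := by
    intro u hu
    rw [Set.mem_setOf_eq, not_le] at hu
    obtain ⟨q, _, h1, h2⟩ := ENNReal.lt_iff_exists_rat_btwn.mp hu
    exact Set.mem_iUnion.2 ⟨q, h1, h2.le⟩
  have hexq : ∃ q : ℚ, volume.restrict (Set.Ioc (0:ℝ) 1)
      {u | C < ENNReal.ofReal q ∧ ENNReal.ofReal q ≤ gg α u} ≠ 0 := by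
    by_contra hq
    push_neg at hq
    exact h (measure_mono_null hsub (measure_iUnion_null hq))
  obtain ⟨q, hq⟩ := hexq
  by_cases hCq : C < ENNReal.ofReal q
  swap
  · refine absurd ?_ hq
    have : {u : ℝ | C < ENNReal.ofReal q ∧ ENNReal.ofReal q ≤ gg α u} = ∅ := by
      ext u; simp [hCq]
    simp [this]
  set A := {u | ENNReal.ofReal q ≤ gg α u} ∩ Set.Ioc (0:ℝ) 1 with hAdef
  have hAmeas : MeasurableSet A :=
    ((measgg hα) measurableSet_Ici).inter measurableSet_Ioc
  have hApos : 0 < volume A := by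
    rw [Measure.restrict_apply' measurableSet_Ioc] at hq
    have heq : {u : ℝ | C < ENNReal.ofReal q ∧ ENNReal.ofReal q ≤ gg α u} ∩ Set.Ioc (0:ℝ) 1
        = A := by
      ext u; simp [hAdef, hCq]
    rw [heq] at hq
    exact pos_iff_ne_zero.mpr hq
  have hAfin : volume A ≤ 1 := by
    calc volume A ≤ volume (Set.Ioc (0:ℝ) 1) := measure_mono Set.inter_subset_right
      _ = 1 := by rw [Real.volume_Ioc]; norm_num
  have hbA := hb _ (memLp_ind hAmeas)
  rw [identity_ind hα hpos hAmeas Set.inter_subset_right,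
    eLp_ind hAmeas Set.inter_subset_right] at hbA
  have hlow : ENNReal.ofReal q * volume A ≤ ∫⁻ s in A, gg α s := by
    calc ENNReal.ofReal q * volume A = ∫⁻ _ in A, ENNReal.ofReal q := by
          rw [setLIntegral_const]
      _ ≤ ∫⁻ s in A, gg α s := by
          refine lintegral_mono_ae ?_
          filter_upwards [ae_restrict_mem hAmeas] with s hs
          exact hs.1
  have hlt : C * volume A < ENNReal.ofReal q * volume A :=
    (ENNReal.mul_lt_mul_iff_left hApos.ne' (hAfin.trans_lt ENNReal.one_lt_top).ne).mpr hCq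
  exact absurd (hlow.trans hbA) (not_le.mpr hlt)

lemma all_le_of_bound {α : ℝ → ℝ} (hα : Measurable α)
    (hpos : ∀ᵐ t ∂(volume.restrict (Set.Icc (0 : ℝ) 1)), 0 < α t)
    {C : ℝ≥0∞} (hC : C ≠ ⊤)
    (hb : ∀ f : ℝ → ℝ, MemLp f 1 (volume.restrict (Set.Icc (0 : ℝ) 1)) →
      eLpNorm (RL α f) 1 (volume.restrict (Set.Icc (0 : ℝ) 1)) ≤
        C * eLpNorm f 1 (volume.restrict (Set.Icc (0 : ℝ) 1))) :
    ∀ s ∈ Set.Icc (0:ℝ) 1, gg α s ≤ C := by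
  have hae := ae_le_of_bound hα hpos hC hb
  have hbad : volume ({u | ¬ gg α u ≤ C} ∩ Set.Ioc (0:ℝ) 1) = 0 := by
    have := ae_iff.mp hae
    rwa [Measure.restrict_apply' measurableSet_Ioc] at this
  intro s hs
  rcases hs.2.lt_or_eq with h1 | h1
  swap
  · have : Set.Ioc s (1:ℝ) = ∅ := by rw [h1, Set.Ioc_self]
    rw [gg, this]
    simp
  -- s < 1
  have hchoice : ∀ n : ℕ, ∃ u : ℝ, u ∈ Set.Ioc s (min 1 (s + ((n:ℝ)+1)⁻¹)) ∧ gg α u ≤ C := by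
    intro n
    set I := Set.Ioc s (min 1 (s + ((n:ℝ)+1)⁻¹)) with hIdef
    have hIsub : I ⊆ Set.Ioc (0:ℝ) 1 := fun u hu =>
      ⟨lt_of_le_of_lt hs.1 hu.1, hu.2.trans (min_le_left _ _)⟩
    have hIpos : 0 < volume I := by
      rw [hIdef, Real.volume_Ioc]
      refine ENNReal.ofReal_pos.2 ?_
      have h2 : s < min 1 (s + ((n:ℝ)+1)⁻¹) := by
        refine lt_min h1 ?_
        have : (0:ℝ) < ((n:ℝ)+1)⁻¹ := by positivity
        linarith
      linarith
    by_contra hcon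
    push_neg at hcon
    have hnull : volume I = 0 := by
      refine measure_mono_null (fun u hu => ?_) hbad
      exact ⟨not_le.mpr (hcon u hu), hIsub hu⟩
    exact absurd hnull hIpos.ne'
  choose u hu1 hu2 using hchoice
  have htend : Tendsto u atTop (𝓝 s) := by
    have hup : ∀ n : ℕ, u n ≤ s + ((n:ℝ)+1)⁻¹ := fun n =>
      (hu1 n).2.trans (min_le_right _ _)
    have hlo : ∀ n : ℕ, s ≤ u n := fun n => (hu1 n).1.le
    have htup : Tendsto (fun n : ℕ => s + ((n:ℝ)+1)⁻¹) atTop (𝓝 s) := by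
      have := tendsto_const_nhds (x := s) (f := atTop (α := ℕ)) |>.add
        tendsto_one_div_add_atTop_nhds_zero_nat
      simpa [one_div] using this
    exact tendsto_of_tendsto_of_tendsto_of_le_of_le tendsto_const_nhds htup hlo hup
  set h : ℕ → ℝ → ℝ≥0∞ := fun n => (Set.Ioc (u n) 1).indicator (fun t => Kk α t (u n))
    with hhdef
  have hmeas : ∀ n, Measurable (h n) := by
    intro n
    have heq : h n = (Set.Ioc (u n) 1).indicator (fun t => Kk' α t (u n)) := by
      funext t
      by_cases hmem : t ∈ Set.Ioc (u n) 1
      · rw [hhdef]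
        simp only [Set.indicator_of_mem hmem]
        rw [Kk'_eq hmem.1]
      · rw [hhdef]; simp only [Set.indicator_of_notMem hmem]
    rw [heq]
    exact (measKk'1 hα (u n)).indicator measurableSet_Ioc
  have key : ∀ t ∈ Set.Ioc s 1, Kk α t s ≤ liminf (fun n => h n t) atTop := by
    intro t ht
    have htt : Tendsto (fun n => h n t) atTop (𝓝 (Kk α t s)) := by
      have hev : (fun n => Kk α t (u n)) =ᶠ[atTop] (fun n => h n t) := by
        filter_upwards [htend.eventually_lt_const ht.1] with n hn
        rw [hhdef]
        simp only [Set.indicator_of_mem (Set.mem_Ioc.mpr ⟨hn, ht.2⟩)]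
      have hcont : Tendsto (fun n => Kk α t (u n)) atTop (𝓝 (Kk α t s)) := by
        have hsub : Tendsto (fun n => t - u n) atTop (𝓝 (t - s)) :=
          tendsto_const_nhds.sub htend
        have hrc : ContinuousAt (fun x : ℝ => x ^ (α t - 1)) (t - s) :=
          Real.continuousAt_rpow_const _ _ (Or.inl (sub_pos.2 ht.1).ne')
        have hrp : Tendsto (fun n => (t - u n) ^ (α t - 1)) atTop
            (𝓝 ((t - s) ^ (α t - 1))) := hrc.tendsto.comp hsub
        have hmul : Tendsto (fun n => (1 / Real.Gamma (α t)) * (t - u n) ^ (α t - 1))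
            atTop (𝓝 ((1 / Real.Gamma (α t)) * (t - s) ^ (α t - 1))) :=
          hrp.const_mul _
        exact (ENNReal.continuous_ofReal.tendsto _).comp hmul
      exact hcont.congr' hev
    rw [htt.liminf_eq]
  calc gg α s = ∫⁻ t in Set.Ioc s 1, Kk α t s := rfl
    _ ≤ ∫⁻ t in Set.Ioc s 1, liminf (fun n => h n t) atTop := by
        refine lintegral_mono_ae ?_
        filter_upwards [ae_restrict_mem measurableSet_Ioc] with t ht
        exact key t ht
    _ ≤ liminf (fun n => ∫⁻ t in Set.Ioc s 1, h n t) atTop :=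
        lintegral_liminf_le fun n => hmeas n
    _ = liminf (fun n => gg α (u n)) atTop := by
        refine Filter.liminf_congr (Filter.Eventually.of_forall fun n => ?_)
        rw [hhdef]
        rw [lintegral_indicator measurableSet_Ioc, Measure.restrict_restrict measurableSet_Ioc,
          Set.inter_eq_self_of_subset_left (Set.Ioc_subset_Ioc_left (hu1 n).1.le)]
        rfl
    _ ≤ C := by
        calc liminf (fun n => gg α (u n)) atTop
            ≤ liminf (fun _ : ℕ => C) atTop :=
              Filter.liminf_le_liminf (Filter.Eventually.of_forall fun n => hu2 n)
          _ = C := Filter.liminf_const C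

/-- **Proposition (boundedness in `L_1[0,1]`).**
`R^{α(·)}` is bounded on `L_1[0,1]` iff
`M := sup_{0≤s≤1} ∫_s^1 (1/Γ(α(t))) (t−s)^{α(t)−1} dt < ∞`, and in this case the operator
norm equals `M` (i.e. `M` is a bound and every bound dominates `M`). -/
theorem stmt_3 (α : ℝ → ℝ) (hα : Measurable α)
    (hpos : ∀ᵐ t ∂(volume.restrict (Set.Icc (0 : ℝ) 1)), 0 < α t) :
    ((∃ C : ℝ, 0 < C ∧
        ∀ f : ℝ → ℝ, MemLp f 1 (volume.restrict (Set.Icc (0 : ℝ) 1)) →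
          eLpNorm (RL α f) 1 (volume.restrict (Set.Icc (0 : ℝ) 1)) ≤
            ENNReal.ofReal C * eLpNorm f 1 (volume.restrict (Set.Icc (0 : ℝ) 1))) ↔
      Msup α < ⊤) ∧
    (Msup α < ⊤ →
      ((∀ f : ℝ → ℝ, MemLp f 1 (volume.restrict (Set.Icc (0 : ℝ) 1)) →
          eLpNorm (RL α f) 1 (volume.restrict (Set.Icc (0 : ℝ) 1)) ≤
            Msup α * eLpNorm f 1 (volume.restrict (Set.Icc (0 : ℝ) 1))) ∧
        (∀ C : ℝ≥0∞,
          (∀ f : ℝ → ℝ, MemLp f 1 (volume.restrict (Set.Icc (0 : ℝ) 1)) →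
            eLpNorm (RL α f) 1 (volume.restrict (Set.Icc (0 : ℝ) 1)) ≤
              C * eLpNorm f 1 (volume.restrict (Set.Icc (0 : ℝ) 1))) →
          Msup α ≤ C))) := by
  have lower : ∀ C : ℝ≥0∞,
      (∀ f : ℝ → ℝ, MemLp f 1 (volume.restrict (Set.Icc (0 : ℝ) 1)) →
        eLpNorm (RL α f) 1 (volume.restrict (Set.Icc (0 : ℝ) 1)) ≤
          C * eLpNorm f 1 (volume.restrict (Set.Icc (0 : ℝ) 1))) →
      Msup α ≤ C := by
    intro C hb
    rcases eq_or_ne C ⊤ with rfl | hC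
    · exact le_top
    · rw [Msup_eq]
      exact iSup₂_le (all_le_of_bound hα hpos hC hb)
  constructor
  · constructor
    · rintro ⟨C, _, hb⟩
      exact lt_of_le_of_lt (lower _ hb) ENNReal.ofReal_lt_top
    · intro hM
      refine ⟨(Msup α).toReal + 1, by positivity, fun f hf => ?_⟩
      refine le_trans (upper_bound hα hpos f hf) (mul_le_mul_left ?_ _)
      calc Msup α = ENNReal.ofReal (Msup α).toReal := (ENNReal.ofReal_toReal hM.ne).symm
        _ ≤ ENNReal.ofReal ((Msup α).toReal + 1) :=
            ENNReal.ofReal_le_ofReal (by linarith)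
  · intro _
    exact ⟨fun f hf => upper_bound hα hpos f hf, fun C hb => lower C hb⟩
end

section
/- Define α : [0,1] → ℝ by α(t) = 1/|ln t| for 0 < t ≤ e^{−1} and α(t) = 1 for e^{−1} ≤ t ≤ 1 (with an arbitrary positive value at t = 0). Then R^{α(·)} is NOT a bounded operator from L_1[0,1] to L_1[0,1]: there is no constant C > 0 with ‖R^{α(·)} f‖_1 ≤ C ‖f‖_1 for all f ∈ L_1[0,1]. -/
open MeasureTheory Real Set Filter
open scoped ENNReal NNReal

lemma gamma_aux {x : ℝ} (hx : 0 < x) (hx1 : x ≤ 1) : Real.Gamma x ≤ 1 / x := by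
  have key : Real.Gamma (x + 1) ≤ 1 := by
    have h := Real.convexOn_Gamma.2 (show (1:ℝ) ∈ Ioi 0 by norm_num)
      (show (2:ℝ) ∈ Ioi 0 by norm_num) (show (0:ℝ) ≤ 1 - x by linarith)
      (show (0:ℝ) ≤ x by linarith) (by ring)
    rw [show (1-x) • (1:ℝ) + x • (2:ℝ) = x + 1 by simp [smul_eq_mul]; ring] at h
    simpa [Real.Gamma_one, Real.Gamma_two, smul_eq_mul] using h
  have h2 : Real.Gamma (x + 1) = x * Real.Gamma x := Real.Gamma_add_one hx.ne'
  rw [le_div_iff₀ hx]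
  nlinarith [Real.Gamma_pos_of_pos hx]

lemma key_bound (α : ℝ → ℝ)
    (h1 : ∀ t : ℝ, 0 < t → t ≤ Real.exp (-1) → α t = 1 / |Real.log t|)
    {a : ℝ} (ha0 : 0 < a) {t : ℝ} (hat : a < t) (ht2 : t ≤ Real.exp (-2)) :
    Real.exp (-1) / (t * (-Real.log t)) ≤
      RL α (Set.indicator (Set.Ioc 0 a) (fun _ => a⁻¹)) t := by
  have ht0 : 0 < t := ha0.trans hat
  have hlog : Real.log t ≤ -2 := by
    rw [← Real.log_exp (-2)]
    exact Real.log_le_log ht0 ht2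
  have hα : α t = 1 / (-Real.log t) := by
    rw [h1 t ht0 (ht2.trans (Real.exp_le_exp.2 (by norm_num))), abs_of_neg (by linarith)]
  have hnl : (2:ℝ) ≤ -Real.log t := by linarith
  have hαpos : 0 < α t := by rw [hα]; positivity
  have hα1 : α t ≤ 1 := by
    rw [hα, div_le_one (by linarith)]; linarith
  have hβ : α t - 1 ≤ 0 := by linarith
  -- t ^ (α t - 1) = e⁻¹ / t
  have hrp : t ^ (α t - 1) = Real.exp (-1) / t := by
    rw [Real.rpow_def_of_pos ht0, hα]
    have hlt0 : Real.log t ≠ 0 := by linarith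
    have : Real.log t * (1 / (-Real.log t) - 1) = -1 - Real.log t := by
      field_simp
    rw [this, show (-1 - Real.log t) = (-1) + (-Real.log t) by ring, Real.exp_add,
      Real.exp_neg, Real.exp_neg, Real.exp_log ht0, div_eq_mul_inv]
  -- the integral
  set g : ℝ → ℝ := fun s => (t - s) ^ (α t - 1) * a⁻¹ with hg
  have hIeq : (∫ s in Set.Ioc (0 : ℝ) t,
      (t - s) ^ (α t - 1) * (Set.indicator (Set.Ioc 0 a) (fun _ => a⁻¹) s))
      = ∫ s in Set.Ioc (0:ℝ) a, g s := by
    have : ∀ s : ℝ, (t - s) ^ (α t - 1) * (Set.indicator (Set.Ioc 0 a) (fun _ => a⁻¹) s)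
        = Set.indicator (Set.Ioc 0 a) g s := by
      intro s
      by_cases hs : s ∈ Set.Ioc (0:ℝ) a <;>
        simp [Set.indicator_of_mem, Set.indicator_of_notMem, hs, hg]
    simp_rw [this]
    rw [setIntegral_indicator measurableSet_Ioc,
      show Set.Ioc (0:ℝ) t ∩ Set.Ioc 0 a = Set.Ioc 0 a by
        rw [Set.Ioc_inter_Ioc]; simp [min_eq_right hat.le]]
  have hgint : IntegrableOn g (Set.Ioc 0 a) := by
    have hc : ContinuousOn g (Set.Icc 0 a) := by
      apply ContinuousOn.mul _ continuousOn_const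
      apply ContinuousOn.rpow_const (by fun_prop)
      intro s hs
      exact Or.inl (by simp only [Set.mem_Icc] at hs; nlinarith [hs.2])
    exact (hc.integrableOn_Icc).mono_set Set.Ioc_subset_Icc_self
  have hmono : Real.exp (-1) / t ≤ ∫ s in Set.Ioc (0:ℝ) a, g s := by
    have hconst : (∫ s in Set.Ioc (0:ℝ) a, (Real.exp (-1) / t * a⁻¹))
        = Real.exp (-1) / t := by
      rw [setIntegral_const, measureReal_def, Real.volume_Ioc, smul_eq_mul,
        ENNReal.toReal_ofReal (by linarith)]
      field_simp
      ring
    rw [← hconst]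
    apply setIntegral_mono_on
    · exact (integrableOn_const measure_Ioc_lt_top.ne)
    · exact hgint
    · exact measurableSet_Ioc
    · intro s hs
      simp only [Set.mem_Ioc] at hs
      have h1' : 0 < t - s := by linarith
      have h2' : t - s ≤ t := by linarith
      have := Real.rpow_le_rpow_of_nonpos h1' h2' hβ
      rw [hrp] at this
      exact mul_le_mul_of_nonneg_right this (by positivity)
  -- Gamma bound
  have hΓpos : 0 < Real.Gamma (α t) := Real.Gamma_pos_of_pos hαpos
  have hΓ : Real.Gamma (α t) ≤ -Real.log t := by
    have := gamma_aux hαpos hα1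
    rw [hα, one_div_one_div] at this
    rw [hα]; exact this
  have hinv : 1 / (-Real.log t) ≤ 1 / Real.Gamma (α t) :=
    one_div_le_one_div_of_le hΓpos hΓ
  calc Real.exp (-1) / (t * (-Real.log t))
      = (1 / (-Real.log t)) * (Real.exp (-1) / t) := by
        field_simp
    _ ≤ (1 / Real.Gamma (α t)) * (Real.exp (-1) / t) :=
        mul_le_mul_of_nonneg_right hinv (by positivity)
    _ ≤ (1 / Real.Gamma (α t)) * ∫ s in Set.Ioc (0:ℝ) a, g s :=
        mul_le_mul_of_nonneg_left hmono (by positivity)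
    _ = RL α (Set.indicator (Set.Ioc 0 a) (fun _ => a⁻¹)) t := by
        rw [RL, hIeq]

lemma hasDeriv_aux {t : ℝ} (ht0 : 0 < t) (hnl : (2:ℝ) ≤ -Real.log t) :
    HasDerivAt (fun u => -(Real.exp (-1)) * Real.log (-Real.log u))
      (Real.exp (-1) / (t * (-Real.log t))) t := by
  have h1 : HasDerivAt (fun u : ℝ => -Real.log u) (-t⁻¹) t :=
    (Real.hasDerivAt_log ht0.ne').neg
  have h2 : HasDerivAt Real.log (-Real.log t)⁻¹ (-Real.log t) :=
    Real.hasDerivAt_log (by linarith)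
  have h3 := (h2.comp t h1).const_mul (-(Real.exp (-1)))
  refine h3.congr_deriv ?_
  have hl : Real.log t ≠ 0 := by linarith
  ring

lemma cont_aux {a : ℝ} (ha0 : 0 < a) :
    ContinuousOn (fun t => Real.exp (-1) / (t * (-Real.log t)))
      (Set.Icc a (Real.exp (-2))) := by
  apply ContinuousOn.div continuousOn_const
  · exact continuousOn_id.mul ((Real.continuousOn_log.mono (by
      intro t ht
      simp only [Set.mem_Icc] at ht
      simp only [Set.mem_compl_iff, Set.mem_singleton_iff]
      linarith [ht.1])).neg)
  · intro t ht
    simp only [Set.mem_Icc] at ht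
    have ht0 : 0 < t := lt_of_lt_of_le ha0 ht.1
    have hlog : Real.log t ≤ -2 := by
      rw [← Real.log_exp (-2)]
      exact Real.log_le_log ht0 ht.2
    nlinarith

lemma integral_calc {a : ℝ} (ha0 : 0 < a) (ha2 : a ≤ Real.exp (-2)) :
    ∫ t in Set.Ioc a (Real.exp (-2)), Real.exp (-1) / (t * (-Real.log t)) =
      Real.exp (-1) * (Real.log (-Real.log a) - Real.log 2) := by
  rw [← intervalIntegral.integral_of_le ha2]
  rw [intervalIntegral.integral_eq_sub_of_hasDerivAt
    (f := fun u => -(Real.exp (-1)) * Real.log (-Real.log u)) ?_ ?_]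
  · rw [Real.log_exp]
    ring_nf
  · intro t ht
    rw [Set.uIcc_of_le ha2, Set.mem_Icc] at ht
    have ht0 : 0 < t := lt_of_lt_of_le ha0 ht.1
    have hlog : Real.log t ≤ -2 := by
      rw [← Real.log_exp (-2)]
      exact Real.log_le_log ht0 ht.2
    exact hasDeriv_aux ht0 (by linarith)
  · exact ((cont_aux ha0).mono (by rw [Set.uIcc_of_le ha2])).intervalIntegrable

/-- **Proposition (unboundedness in `L_1[0,1]`).**
For `α(t) = 1/|ln t|` on `(0, e⁻¹]`, `α(t) = 1` on `[e⁻¹, 1]` (and an arbitrary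
positive value at `t = 0`), the operator `R^{α(·)}` is not bounded on `L_1[0,1]`. -/
theorem stmt_4 (α : ℝ → ℝ)
    (h1 : ∀ t : ℝ, 0 < t → t ≤ Real.exp (-1) → α t = 1 / |Real.log t|)
    (h2 : ∀ t : ℝ, Real.exp (-1) ≤ t → t ≤ 1 → α t = 1)
    (h0 : 0 < α 0) :
    ¬ ∃ C : ℝ, 0 < C ∧
        ∀ f : ℝ → ℝ, MemLp f 1 (volume.restrict (Set.Icc (0 : ℝ) 1)) →
          eLpNorm (RL α f) 1 (volume.restrict (Set.Icc (0 : ℝ) 1)) ≤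
            ENNReal.ofReal C * eLpNorm f 1 (volume.restrict (Set.Icc (0 : ℝ) 1)) := by
  rintro ⟨C, hC, hbd⟩
  set a : ℝ := Real.exp (-(Real.exp (C * Real.exp 1 + 1))) with ha_def
  have ha0 : 0 < a := Real.exp_pos _
  have hexp1 : (2:ℝ) < Real.exp 1 := by
    have := Real.exp_one_gt_d9; linarith
  have hCe : (1:ℝ) ≤ C * Real.exp 1 + 1 := by nlinarith
  have ha2 : a < Real.exp (-2) := by
    rw [ha_def, Real.exp_lt_exp]
    have : Real.exp 1 ≤ Real.exp (C * Real.exp 1 + 1) := Real.exp_le_exp.2 hCe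
    linarith
  have hloga : -Real.log a = Real.exp (C * Real.exp 1 + 1) := by
    rw [ha_def, Real.log_exp]; ring
  set f : ℝ → ℝ := Set.indicator (Set.Ioc 0 a) (fun _ => a⁻¹) with hf_def
  set μ := volume.restrict (Set.Icc (0:ℝ) 1) with hμ
  have hexp2le : Real.exp (-2) ≤ 1 := by
    rw [show (1:ℝ) = Real.exp 0 by simp]; exact Real.exp_le_exp.2 (by norm_num)
  have ha1 : a ≤ 1 := by linarith
  -- f is in L¹
  have hf_mem : MemLp f 1 μ := by
    rw [memLp_one_iff_integrable, hf_def, integrable_indicator_iff measurableSet_Ioc]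
    exact integrableOn_const
      (((Measure.restrict_apply_le _ _).trans_lt measure_Ioc_lt_top).ne)
  -- ‖f‖₁ ≤ 1
  have hf_norm : eLpNorm f 1 μ ≤ 1 := by
    rw [eLpNorm_one_eq_lintegral_enorm]
    have hind : ∀ x, (‖f x‖ₑ : ℝ≥0∞)
        = Set.indicator (Set.Ioc 0 a) (fun _ => (‖a⁻¹‖ₑ : ℝ≥0∞)) x := by
      intro x
      by_cases hx : x ∈ Set.Ioc (0:ℝ) a <;>
        simp [hf_def, Set.indicator_of_mem, Set.indicator_of_notMem, hx]
    simp_rw [hind]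
    rw [lintegral_indicator measurableSet_Ioc, lintegral_const,
      Measure.restrict_restrict measurableSet_Ioc,
      Measure.restrict_apply MeasurableSet.univ, Set.univ_inter]
    have hsub : Set.Ioc (0:ℝ) a ∩ Set.Icc 0 1 = Set.Ioc 0 a := by
      apply Set.inter_eq_left.2
      intro x hx
      simp only [Set.mem_Ioc] at hx
      exact ⟨hx.1.le, hx.2.trans ha1⟩
    rw [hsub, Real.volume_Ioc, Real.enorm_eq_ofReal (by positivity), sub_zero,
      ← ENNReal.ofReal_mul (by positivity), inv_mul_cancel₀ ha0.ne', ENNReal.ofReal_one]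
  -- lower bound on the norm of RL α f
  have hlow : ENNReal.ofReal (Real.exp (-1) * (Real.log (-Real.log a) - Real.log 2)) ≤
      eLpNorm (RL α f) 1 μ := by
    rw [eLpNorm_one_eq_lintegral_enorm]
    have hset : Set.Ioc a (Real.exp (-2)) ⊆ Set.Icc (0:ℝ) 1 := by
      intro t ht
      simp only [Set.mem_Ioc] at ht
      exact ⟨(ha0.trans ht.1).le, ht.2.trans hexp2le⟩
    have step1 : (∫⁻ t in Set.Ioc a (Real.exp (-2)), (‖RL α f t‖ₑ : ℝ≥0∞)) ≤
        ∫⁻ t, (‖RL α f t‖ₑ : ℝ≥0∞) ∂μ := by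
      rw [hμ]
      exact lintegral_mono' (Measure.restrict_mono hset le_rfl) le_rfl
    refine le_trans ?_ step1
    have step2 : (∫⁻ t in Set.Ioc a (Real.exp (-2)),
        ENNReal.ofReal (Real.exp (-1) / (t * (-Real.log t)))) ≤
        ∫⁻ t in Set.Ioc a (Real.exp (-2)), (‖RL α f t‖ₑ : ℝ≥0∞) := by
      apply setLIntegral_mono' measurableSet_Ioc
      intro t ht
      simp only [Set.mem_Ioc] at ht
      refine le_trans (ENNReal.ofReal_le_ofReal ?_) (Real.ofReal_le_enorm _)
      exact key_bound α h1 ha0 ht.1 ht.2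
    refine le_trans ?_ step2
    rw [← integral_calc ha0 ha2.le, ← ofReal_integral_eq_lintegral_ofReal]
    · exact ((cont_aux ha0).integrableOn_Icc).mono_set Set.Ioc_subset_Icc_self
    · apply (ae_restrict_iff' measurableSet_Ioc).2
      apply ae_of_all
      intro t ht
      simp only [Set.mem_Ioc] at ht
      have ht0 : 0 < t := ha0.trans ht.1
      have hlog : Real.log t ≤ -2 := by
        rw [← Real.log_exp (-2)]
        exact Real.log_le_log ht0 ht.2
      have : 0 < t * (-Real.log t) := by nlinarith
      positivity
  -- conclude
  have hval : Real.exp (-1) * (Real.log (-Real.log a) - Real.log 2)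
      = C + Real.exp (-1) * (1 - Real.log 2) := by
    rw [hloga, Real.log_exp]
    have hee : Real.exp (-1) * Real.exp 1 = 1 := by
      rw [← Real.exp_add]; norm_num
    nlinarith [hee]
  have hlog2 : Real.log 2 < 1 := by
    have := Real.log_two_lt_d9; linarith
  have hgt : C < Real.exp (-1) * (Real.log (-Real.log a) - Real.log 2) := by
    rw [hval]
    have : 0 < Real.exp (-1) * (1 - Real.log 2) := by
      apply mul_pos (Real.exp_pos _); linarith
    linarith
  have hC' : eLpNorm (RL α f) 1 μ ≤ ENNReal.ofReal C := by
    refine le_trans (hbd f hf_mem) ?_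
    calc ENNReal.ofReal C * eLpNorm f 1 μ ≤ ENNReal.ofReal C * 1 :=
          mul_le_mul_right hf_norm _
      _ = ENNReal.ofReal C := mul_one _
  have hlt : ENNReal.ofReal C <
      ENNReal.ofReal (Real.exp (-1) * (Real.log (-Real.log a) - Real.log 2)) :=
    (ENNReal.ofReal_lt_ofReal_iff (by linarith)).2 hgt
  exact absurd (hlow.trans hC') (not_le.2 hlt)
end

section
/- Let 1 ≤ p ≤ ∞, r > 0, and let α : [0,r] → ℝ be measurable with α(t) > 0 a.e. Define J_p : L_p[0,1] → L_p[0,r] by (J_p f)(s) := r^{−1/p} f(s/r) for 0 ≤ s ≤ r (with r^{−1/p} = 1 when p = ∞), and set α̃(t) := α(rt) for 0 ≤ t ≤ 1. Then for every f ∈ L_p[0,1] and almost every t ∈ [0,r]: (R^{α(·)}(J_p f))(t) = r^{α(t) − 1/p} · (R^{α̃(·)} f)(t/r). Equivalently, for any 1 ≤ q ≤ ∞, J_q^{−1} ∘ R^{α(·)} ∘ J_p = M_{α,r} ∘ R^{α̃(·)} as operators from L_p[0,1] to L_q[0,1], where (M_{α,r} g)(t) := r^{α̃(t)+1/q−1/p}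 g(t). -/
open MeasureTheory Real Set Filter
open scoped ENNReal NNReal

/-- **Proposition (scaling property).**
For `1 ≤ p ≤ ∞`, `r > 0` and `α : [0,r] → ℝ` measurable and a.e. positive, with
`(J_p f)(s) = r^{−1/p} f(s/r)` and `α̃(t) = α(rt)`, for every `f ∈ L_p[0,1]` and almost
every `t ∈ [0,r]` one has `(R^{α(·)}(J_p f))(t) = r^{α(t)−1/p} (R^{α̃(·)}f)(t/r)`
(with `1/p = 0` for `p = ∞`, realized by `p.toReal⁻¹`). -/
theorem stmt_8 (p : ℝ≥0∞) (hp : 1 ≤ p) (r : ℝ) (hr : 0 < r)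
    (α : ℝ → ℝ) (hα : Measurable α)
    (hpos : ∀ᵐ t ∂(volume.restrict (Set.Icc (0 : ℝ) r)), 0 < α t)
    (f : ℝ → ℝ) (hf : MemLp f p (volume.restrict (Set.Icc (0 : ℝ) 1))) :
    ∀ᵐ t ∂(volume.restrict (Set.Icc (0 : ℝ) r)),
      RL α (fun s => r ^ (-(1 / p.toReal)) * f (s / r)) t =
        r ^ (α t - 1 / p.toReal) * RL (fun u => α (r * u)) f (t / r) := by
  filter_upwards [self_mem_ae_restrict
      (measurableSet_Icc : MeasurableSet (Set.Icc (0 : ℝ) r))] with t ht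
  obtain ⟨ht0, _⟩ := ht
  have hr0 : r ≠ 0 := ne_of_gt hr
  have htr0 : (0 : ℝ) ≤ t / r := div_nonneg ht0 hr.le
  have hts : r * (t / r) = t := mul_div_cancel₀ t hr0
  unfold RL
  simp only []
  rw [hts]
  set c : ℝ := α t - 1 with hcdef
  set k : ℝ := r ^ (-(1 / p.toReal)) with hkdef
  have h1 : (∫ s in Set.Ioc (0 : ℝ) t, (t - s) ^ c * (k * f (s / r)))
      = r • ∫ u in Set.Ioc (0 : ℝ) (t / r), (t - r * u) ^ c * (k * f u) := by
    rw [← intervalIntegral.integral_of_le ht0,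
      ← intervalIntegral.integral_of_le htr0]
    have h := intervalIntegral.integral_comp_div (a := 0) (b := t)
      (f := fun u => (t - r * u) ^ c * (k * f u)) hr0
    simp only [zero_div] at h
    rw [← h]
    apply intervalIntegral.integral_congr
    intro s _
    simp only [mul_div_cancel₀ _ hr0]
  have h2 : (∫ u in Set.Ioc (0 : ℝ) (t / r), (t - r * u) ^ c * (k * f u))
      = (r ^ c * k) * ∫ u in Set.Ioc (0 : ℝ) (t / r), (t / r - u) ^ c * f u := by
    rw [← integral_const_mul]
    apply setIntegral_congr_fun measurableSet_Ioc
    intro u hu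
    have hu2 : (0 : ℝ) ≤ t / r - u := sub_nonneg.mpr hu.2
    have he : t - r * u = r * (t / r - u) := by field_simp
    show (t - r * u) ^ c * (k * f u) = r ^ c * k * ((t / r - u) ^ c * f u)
    rw [he, Real.mul_rpow hr.le hu2]
    ring
  rw [h1, h2, smul_eq_mul]
  have hrpow : r * (r ^ c * k) = r ^ (α t - 1 / p.toReal) := by
    rw [hkdef, hcdef,
      show α t - 1 / p.toReal = 1 + (α t - 1) + -(1 / p.toReal) by ring,
      Real.rpow_add hr, Real.rpow_add hr, Real.rpow_one, mul_assoc]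
  rw [← hrpow]
  ring
end
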